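/- arXiv:0712.3996 — 3 statements merged into one kernel-verified Lean document; each statement's English description precedes it below -/
import Mathlib

section
/- Extension from a truncated box to the entire box: Every TP-function f on a truncated box B_m^{m'}(a) can be extended to a TP-function on the entire box B(a); that is, there exists a TP-function h on B(a) = B_0^{|a|}(a) whose restriction to B_m^{m'}(a) equals f. -/
/-- The `q`-th unit vector of `ℤ^n` (modelled with `ℕ` coordinates, since box
vectors are nonnegative). -/
def unitv (n : ℕ) (q : Fin n) : Fin n → ℕ := fun i => if i = q then 1 else 0

/-- The size `|x| = x_1 + … + x_n` of a vector. -/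
def vsize {n : ℕ} (x : Fin n → ℕ) : ℕ := ∑ i, x i

/-- The truncated box `B_m^{m'}(a) = {x : 0 ≤ x ≤ a, m ≤ |x| ≤ m'}`. -/
def tbox {n : ℕ} (a : Fin n → ℕ) (m m' : ℕ) : Set (Fin n → ℕ) :=
  {x | (∀ i, x i ≤ a i) ∧ m ≤ vsize x ∧ vsize x ≤ m'}

/-- The TP3-relations on a subset `B` of `ℤ^n`. -/
def TP3 {n : ℕ} (B : Set (Fin n → ℕ)) (f : (Fin n → ℕ) → ℝ) : Prop :=
  ∀ (x : Fin n → ℕ) (i j k : Fin n), i < j → j < k →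
    x + unitv n i + unitv n k ∈ B → x + unitv n j ∈ B →
    x + unitv n i + unitv n j ∈ B → x + unitv n k ∈ B →
    x + unitv n i ∈ B → x + unitv n j + unitv n k ∈ B →
    f (x + unitv n i + unitv n k) + f (x + unitv n j) =
      max (f (x + unitv n i + unitv n j) + f (x + unitv n k))
          (f (x + unitv n i) + f (x + unitv n j + unitv n k))

/-- The TP4-relations on a subset `B` of `ℤ^n`. -/
def TP4 {n : ℕ} (B : Set (Fin n → ℕ)) (f : (Fin n → ℕ) → ℝ) : Prop :=
  ∀ (x : Fin n → ℕ) (i j k l : Fin n), i < j → j < k → k < l →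
    x + unitv n i + unitv n k ∈ B → x + unitv n j + unitv n l ∈ B →
    x + unitv n i + unitv n j ∈ B → x + unitv n k + unitv n l ∈ B →
    x + unitv n i + unitv n l ∈ B → x + unitv n j + unitv n k ∈ B →
    f (x + unitv n i + unitv n k) + f (x + unitv n j + unitv n l) =
      max (f (x + unitv n i + unitv n j) + f (x + unitv n k + unitv n l))
          (f (x + unitv n i + unitv n l) + f (x + unitv n j + unitv n k))

/-- A tropical Plücker function on `B`. -/
def IsTP {n : ℕ} (B : Set (Fin n → ℕ)) (f : (Fin n → ℕ) → ℝ) : Prop :=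
  TP3 B f ∧ TP4 B f

/-- `x` is a fuzzy-interval (fint) in the box `B(a)`: it is a nonzero vector of the
box and `x_j = a_j` for every index `j` lying strictly between two indices of the
support of `x` (equivalently, strictly between `c(x)` and `d(x)`). -/
def IsFint {n : ℕ} (a x : Fin n → ℕ) : Prop :=
  (∀ i, x i ≤ a i) ∧ x ≠ 0 ∧
  ∀ i j k : Fin n, i < j → j < k → x i ≠ 0 → x k ≠ 0 → x j = a j

/-- `x` is a sesquialteral fuzzy-interval (sint): not a fint, but the sum of two
fints `x', x''` with `d(x') < c(x'')` and `x'_i = a_i` for all `i < d(x')`. -/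
def IsSint {n : ℕ} (a x : Fin n → ℕ) : Prop :=
  ¬ IsFint a x ∧
  ∃ x' x'' : Fin n → ℕ, IsFint a x' ∧ IsFint a x'' ∧ x = x' + x'' ∧
    (∀ i j : Fin n, x' i ≠ 0 → x'' j ≠ 0 → i < j) ∧
    (∀ i : Fin n, (∃ j, i < j ∧ x' j ≠ 0) → x' i = a i)

/-- The standard basis `𝓑 = Sint(a;m) ∪ Int(a;m) ∪ … ∪ Int(a;m')`, with the zero
vector added when `m = 0`. -/
def stdBasis {n : ℕ} (a : Fin n → ℕ) (m m' : ℕ) : Set (Fin n → ℕ) :=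
  {x | (IsSint a x ∧ vsize x = m) ∨ (IsFint a x ∧ m ≤ vsize x ∧ vsize x ≤ m') ∨
       (m = 0 ∧ x = 0)}


section helpers
variable {n : ℕ}

lemma vsize_add (x y : Fin n → ℕ) : vsize (x + y) = vsize x + vsize y := by
  simp [vsize, Finset.sum_add_distrib]

lemma vsize_unitv (i : Fin n) : vsize (unitv n i) = 1 := by
  simp [vsize, unitv]

lemma vsize_add_unitv (x : Fin n → ℕ) (i : Fin n) :
    vsize (x + unitv n i) = vsize x + 1 := by
  rw [vsize_add, vsize_unitv]

lemma apply_unitv_self (x : Fin n → ℕ) (u : Fin n) : (x + unitv n u) u = x u + 1 := by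
  simp [unitv]

lemma apply_unitv_ne (x : Fin n → ℕ) (u q : Fin n) (h : q ≠ u) : (x + unitv n u) q = x q := by
  simp [unitv, h]

lemma add_unitv_le (a x : Fin n → ℕ) (u : Fin n) (hx : ∀ q, x q ≤ a q) (hu : x u < a u) :
    ∀ q, (x + unitv n u) q ≤ a q := by
  intro q
  by_cases h : q = u
  · subst h; rw [apply_unitv_self]; omega
  · rw [apply_unitv_ne _ _ _ h]; exact hx q

lemma shiftA (A B C D E F c : ℝ) (h : A + B = max (C + D) (E + F)) :
    A + (B - c) = max (C + (D - c)) ((E - c) + F) := by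
  rcases le_total (C + D) (E + F) with h' | h'
  · rw [max_eq_right h'] at h; rw [max_eq_right (by linarith)]; linarith
  · rw [max_eq_left h'] at h; rw [max_eq_left (by linarith)]; linarith

lemma shift4 (A B C D E F c1 c2 c3 c4 c5 c6 : ℝ) (h : A + B = max (C + D) (E + F))
    (h34 : c1 + c2 = c3 + c4) (h56 : c1 + c2 = c5 + c6) :
    (A - c1) + (B - c2) = max ((C - c3) + (D - c4)) ((E - c5) + (F - c6)) := by
  rcases le_total (C + D) (E + F) with h' | h'
  · rw [max_eq_right h'] at h; rw [max_eq_right (by linarith)]; linarith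
  · rw [max_eq_left h'] at h; rw [max_eq_left (by linarith)]; linarith

end helpers

section gf
variable {n : ℕ}

/-- value assigned on the new bottom layer -/
noncomputable def gfun (a : Fin n → ℕ) (f : (Fin n → ℕ) → ℝ) (K : ℝ) (N : ℕ)
    (y : Fin n → ℕ) : ℝ :=
  if h : (Finset.univ.filter fun q => y q < a q).Nonempty then
    f (y + unitv n ((Finset.univ.filter fun q => y q < a q).max' h))
      - K * ((N * (n - ((Finset.univ.filter fun q => y q < a q).max' h : ℕ))
          + y ((Finset.univ.filter fun q => y q < a q).max' h) + 1 : ℕ) : ℝ)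
  else 0

lemma gfun_eq (a : Fin n → ℕ) (f : (Fin n → ℕ) → ℝ) (K : ℝ) (N : ℕ) (y : Fin n → ℕ)
    (t : Fin n) (c : ℕ) (h1 : y t < a t) (h2 : ∀ q, t < q → ¬ y q < a q) (h3 : y t = c) :
    gfun a f K N y = f (y + unitv n t) - K * ((N * (n - (t : ℕ)) + c + 1 : ℕ) : ℝ) := by
  have hmem : t ∈ Finset.univ.filter fun q => y q < a q := by simp [h1]
  have hne : (Finset.univ.filter fun q => y q < a q).Nonempty := ⟨t, hmem⟩
  have hmax : (Finset.univ.filter fun q => y q < a q).max' hne = t := by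
    apply le_antisymm
    · apply Finset.max'_le
      intro q hq
      simp only [Finset.mem_filter] at hq
      by_contra hlt
      exact h2 q (lt_of_not_ge hlt) hq.2
    · exact Finset.le_max' _ _ hmem
  rw [gfun, dif_pos hne, hmax, h3]

lemma gfun_eq' (a : Fin n → ℕ) (f : (Fin n → ℕ) → ℝ) (K : ℝ) (N : ℕ) (y : Fin n → ℕ)
    (h : ∃ q, y q < a q) :
    ∃ t : Fin n, y t < a t ∧ (∀ q, t < q → ¬ y q < a q) ∧
      gfun a f K N y = f (y + unitv n t) - K * ((N * (n - (t : ℕ)) + y t + 1 : ℕ) : ℝ) := by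
  obtain ⟨q0, hq0⟩ := h
  have hne : (Finset.univ.filter fun q => y q < a q).Nonempty := ⟨q0, by simp [hq0]⟩
  set t := (Finset.univ.filter fun q => y q < a q).max' hne with ht
  have h1 : y t < a t := by
    have := (Finset.univ.filter fun q => y q < a q).max'_mem hne
    simpa using this
  have h2 : ∀ q, t < q → ¬ y q < a q := by
    intro q hq hcon
    have : q ≤ t := Finset.le_max' _ _ (by simp [hcon])
    omega
  exact ⟨t, h1, h2, gfun_eq a f K N y t (y t) h1 h2 rfl⟩

end gf

section step
variable {n : ℕ}

/-- the candidate extension to layers below `s` -/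
noncomputable def hext (a : Fin n → ℕ) (f : (Fin n → ℕ) → ℝ) (K : ℝ) (N s : ℕ)
    (y : Fin n → ℕ) : ℝ :=
  if vsize y < s then gfun a f K N y else f y

lemma hext_low (a : Fin n → ℕ) (f : (Fin n → ℕ) → ℝ) (K : ℝ) (N s : ℕ)
    (y : Fin n → ℕ) (h : vsize y < s) : hext a f K N s y = gfun a f K N y := if_pos h

lemma hext_high (a : Fin n → ℕ) (f : (Fin n → ℕ) → ℝ) (K : ℝ) (N s : ℕ)
    (y : Fin n → ℕ) (h : ¬ vsize y < s) : hext a f K N s y = f y := if_neg h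

lemma mem_lift {a : Fin n → ℕ} {A B : ℕ} {pt : Fin n → ℕ}
    (h : pt ∈ tbox a (A - 1) B) (h2 : A ≤ vsize pt) : pt ∈ tbox a A B :=
  ⟨h.1, h2, h.2.2⟩

lemma step_down (a : Fin n → ℕ) (s m' : ℕ) (hsm : s ≤ m')
    (f : (Fin n → ℕ) → ℝ) (hf : IsTP (tbox a s m') f) :
    ∃ g, IsTP (tbox a (s - 1) m') g ∧ ∀ x ∈ tbox a s m', g x = f x := by
  classical
  obtain ⟨Fb, hFb⟩ : ∃ Fb : ℝ, ∀ z : Fin n → ℕ, (∀ q, z q ≤ a q) → |f z| ≤ Fb := by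
    refine ⟨(Fintype.piFinset fun i => Finset.range (a i + 1)).sup'
      ⟨0, by simp⟩ fun z => |f z|, ?_⟩
    intro z hz
    exact Finset.le_sup' (f := fun z => |f z|)
      (by simp only [Fintype.mem_piFinset, Finset.mem_range, Nat.lt_succ_iff]; exact hz)
  have hFb0 : 0 ≤ Fb := le_trans (abs_nonneg _) (hFb 0 fun q => Nat.zero_le _)
  set K : ℝ := 4 * Fb + 1 with hKdef
  have hK0 : 0 ≤ K := by positivity
  set N : ℕ := (Finset.univ.sup a) + 1 with hNdef
  have haN : ∀ q, a q < N := fun q =>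
    Nat.lt_succ_of_le (Finset.le_sup (Finset.mem_univ q))
  refine ⟨hext a f K N s, ⟨?_, ?_⟩, ?_⟩
  · -- TP3
    intro x i j k hij hjk m1 m2 m3 m4 m5 m6
    have hik : i < k := hij.trans hjk
    by_cases hbr : s ≤ vsize x + 1
    · rw [hext_high a f K N s (x + unitv n i + unitv n k)
            (by rw [vsize_add_unitv, vsize_add_unitv]; omega),
          hext_high a f K N s (x + unitv n j) (by rw [vsize_add_unitv]; omega),
          hext_high a f K N s (x + unitv n i + unitv n j)
            (by rw [vsize_add_unitv, vsize_add_unitv]; omega),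
          hext_high a f K N s (x + unitv n k) (by rw [vsize_add_unitv]; omega),
          hext_high a f K N s (x + unitv n i) (by rw [vsize_add_unitv]; omega),
          hext_high a f K N s (x + unitv n j + unitv n k)
            (by rw [vsize_add_unitv, vsize_add_unitv]; omega)]
      exact hf.1 x i j k hij hjk
        (mem_lift m1 (by rw [vsize_add_unitv, vsize_add_unitv]; omega))
        (mem_lift m2 (by rw [vsize_add_unitv]; omega))
        (mem_lift m3 (by rw [vsize_add_unitv, vsize_add_unitv]; omega))
        (mem_lift m4 (by rw [vsize_add_unitv]; omega))
        (mem_lift m5 (by rw [vsize_add_unitv]; omega))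
        (mem_lift m6 (by rw [vsize_add_unitv, vsize_add_unitv]; omega))
    · have hs1 : s - 1 ≤ vsize x + 1 := by
        have := m5.2.1; rwa [vsize_add_unitv] at this
      have hup : vsize x + 2 ≤ m' := by
        have := m1.2.2; rwa [vsize_add_unitv, vsize_add_unitv] at this
      have hxa : ∀ q, x q ≤ a q := fun q => le_trans (Nat.le_add_right _ _) (m2.1 q)
      have hxi : x i < a i := by
        have h := m3.1 i
        rw [apply_unitv_ne _ _ _ hij.ne, apply_unitv_self] at h
        omega
      have hxj : x j < a j := by
        have h := m6.1 j
        rw [apply_unitv_ne _ _ _ hjk.ne, apply_unitv_self] at h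
        omega
      have hxk : x k < a k := by
        have h := m1.1 k
        rw [apply_unitv_self, apply_unitv_ne _ _ _ hik.ne'] at h
        omega
      set P := Finset.univ.filter (fun q => x q < a q) with hP
      have hiP : i ∈ P := by rw [hP]; exact Finset.mem_filter.mpr ⟨Finset.mem_univ i, hxi⟩
      have hkP : k ∈ P := by rw [hP]; exact Finset.mem_filter.mpr ⟨Finset.mem_univ k, hxk⟩
      have hPne : P.Nonempty := ⟨i, hiP⟩
      set p0 := P.max' hPne with hp0def
      have hp0 : x p0 < a p0 := (Finset.mem_filter.mp (P.max'_mem hPne)).2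
      have hp0max : ∀ q, p0 < q → ¬ x q < a q := by
        intro q hq hc
        have hqP : q ∈ P := by rw [hP]; exact Finset.mem_filter.mpr ⟨Finset.mem_univ q, hc⟩
        exact absurd hq (not_lt.mpr (Finset.le_max' _ _ hqP))
      have hkp0 : k ≤ p0 := Finset.le_max' _ _ hkP
      rw [hext_high a f K N s (x + unitv n i + unitv n k)
            (by rw [vsize_add_unitv, vsize_add_unitv]; omega),
          hext_high a f K N s (x + unitv n i + unitv n j)
            (by rw [vsize_add_unitv, vsize_add_unitv]; omega),
          hext_high a f K N s (x + unitv n j + unitv n k)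
            (by rw [vsize_add_unitv, vsize_add_unitv]; omega),
          hext_low a f K N s (x + unitv n j) (by rw [vsize_add_unitv]; omega),
          hext_low a f K N s (x + unitv n k) (by rw [vsize_add_unitv]; omega),
          hext_low a f K N s (x + unitv n i) (by rw [vsize_add_unitv]; omega)]
      rcases eq_or_lt_of_le hkp0 with hk | hk
      · -- p0 = k
        have hp0k : ∀ q, k < q → ¬ x q < a q := by
          intro q hq; exact hp0max q (by rw [← hk]; exact hq)
        have hxk' : x k < a k := hxk
        have gy1 : gfun a f K N (x + unitv n i) =
            f (x + unitv n i + unitv n k) - K * ((N * (n - (k:ℕ)) + x k + 1 : ℕ) : ℝ) := by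
          apply gfun_eq
          · rw [apply_unitv_ne _ _ _ hik.ne']; exact hxk
          · intro q hq; rw [apply_unitv_ne _ _ _ (hik.trans hq).ne']; exact hp0k q hq
          · rw [apply_unitv_ne _ _ _ hik.ne']
        have gy2 : gfun a f K N (x + unitv n j) =
            f (x + unitv n j + unitv n k) - K * ((N * (n - (k:ℕ)) + x k + 1 : ℕ) : ℝ) := by
          apply gfun_eq
          · rw [apply_unitv_ne _ _ _ hjk.ne']; exact hxk
          · intro q hq; rw [apply_unitv_ne _ _ _ (hjk.trans hq).ne']; exact hp0k q hq
          · rw [apply_unitv_ne _ _ _ hjk.ne']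
        obtain ⟨t, ht1, ht2, ht3⟩ := gfun_eq' a f K N (x + unitv n k)
          ⟨j, by rw [apply_unitv_ne _ _ _ hjk.ne]; exact hxj⟩
        have htk : t ≤ k := by
          by_contra hcon
          push_neg at hcon
          have h2 := ht1
          rw [apply_unitv_ne _ _ _ hcon.ne'] at h2
          exact hp0k t hcon h2
        have hw3 : N * (n - (k:ℕ)) + x k + 1 + 1 ≤ N * (n - (t:ℕ)) + (x + unitv n k) t + 1 := by
          rcases eq_or_lt_of_le htk with he | hlt
          · rw [he, apply_unitv_self]; omega
          · rw [apply_unitv_ne _ _ _ hlt.ne]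
            have htv : (t:ℕ) < (k:ℕ) := hlt
            have hkn : (k:ℕ) < n := k.isLt
            have hgap : n - (k:ℕ) + 1 ≤ n - (t:ℕ) := by omega
            have hmul : N * (n - (k:ℕ)) + N ≤ N * (n - (t:ℕ)) := by
              calc N * (n - (k:ℕ)) + N = N * (n - (k:ℕ) + 1) := by ring
                _ ≤ N * (n - (t:ℕ)) := Nat.mul_le_mul_left N hgap
            have := haN k
            omega
        rw [gy1, gy2, ht3]
        rw [max_eq_right (by
          have hb1 : |f (x + unitv n i + unitv n k)| ≤ Fb := hFb _ m1.1
          have hb2 : |f (x + unitv n j + unitv n k)| ≤ Fb := hFb _ m6.1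
          have hb3 : |f (x + unitv n i + unitv n j)| ≤ Fb := hFb _ m3.1
          have hb4 : |f (x + unitv n k + unitv n t)| ≤ Fb :=
            hFb _ (add_unitv_le a _ _ m4.1 ht1)
          have hcast : ((N * (n - (k:ℕ)) + x k + 1 + 1 : ℕ) : ℝ) ≤
              ((N * (n - (t:ℕ)) + (x + unitv n k) t + 1 : ℕ) : ℝ) := Nat.cast_le.mpr hw3
          have hKmul := mul_le_mul_of_nonneg_left hcast hK0
          rw [abs_le] at hb1 hb2 hb3 hb4
          push_cast at hKmul
          push_cast
          linarith [hb1.1, hb2.1, hb3.2, hb4.2, hFb0])]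
        ring
      · -- k < p0
        have hru : ∀ u : Fin n, u < p0 → x u < a u →
            gfun a f K N (x + unitv n u) =
              f (x + unitv n u + unitv n p0) - K * ((N * (n - (p0:ℕ)) + x p0 + 1 : ℕ) : ℝ) := by
          intro u hu hxu
          apply gfun_eq
          · rw [apply_unitv_ne _ _ _ hu.ne']; exact hp0
          · intro q hq; rw [apply_unitv_ne _ _ _ (hu.trans hq).ne']; exact hp0max q hq
          · rw [apply_unitv_ne _ _ _ hu.ne']
        have memp0 : ∀ u : Fin n, u < p0 → x u < a u →
            x + unitv n u + unitv n p0 ∈ tbox a s m' := by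
          intro u hu hxu
          refine ⟨?_, ?_, ?_⟩
          · apply add_unitv_le a _ _ (add_unitv_le a _ _ hxa hxu)
            rw [apply_unitv_ne _ _ _ hu.ne']; exact hp0
          · rw [vsize_add_unitv, vsize_add_unitv]; omega
          · rw [vsize_add_unitv, vsize_add_unitv]; omega
        have H := hf.2 x i j k p0 hij hjk hk
          (mem_lift m1 (by rw [vsize_add_unitv, vsize_add_unitv]; omega))
          (memp0 j (hjk.trans hk) hxj)
          (mem_lift m3 (by rw [vsize_add_unitv, vsize_add_unitv]; omega))
          (memp0 k hk hxk)
          (memp0 i (hik.trans hk) hxi)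
          (mem_lift m6 (by rw [vsize_add_unitv, vsize_add_unitv]; omega))
        rw [hru i (hik.trans hk) hxi, hru j (hjk.trans hk) hxj, hru k hk hxk]
        exact shiftA _ _ _ _ _ _ _ H
  · -- TP4
    intro x i j k l hij hjk hkl m1 m2 m3 m4 m5 m6
    have hik : i < k := hij.trans hjk
    have hjl : j < l := hjk.trans hkl
    have hil : i < l := hik.trans hkl
    by_cases hbr : s ≤ vsize x + 2
    · rw [hext_high a f K N s (x + unitv n i + unitv n k)
            (by rw [vsize_add_unitv, vsize_add_unitv]; omega),
          hext_high a f K N s (x + unitv n j + unitv n l)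
            (by rw [vsize_add_unitv, vsize_add_unitv]; omega),
          hext_high a f K N s (x + unitv n i + unitv n j)
            (by rw [vsize_add_unitv, vsize_add_unitv]; omega),
          hext_high a f K N s (x + unitv n k + unitv n l)
            (by rw [vsize_add_unitv, vsize_add_unitv]; omega),
          hext_high a f K N s (x + unitv n i + unitv n l)
            (by rw [vsize_add_unitv, vsize_add_unitv]; omega),
          hext_high a f K N s (x + unitv n j + unitv n k)
            (by rw [vsize_add_unitv, vsize_add_unitv]; omega)]
      exact hf.2 x i j k l hij hjk hkl
        (mem_lift m1 (by rw [vsize_add_unitv, vsize_add_unitv]; omega))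
        (mem_lift m2 (by rw [vsize_add_unitv, vsize_add_unitv]; omega))
        (mem_lift m3 (by rw [vsize_add_unitv, vsize_add_unitv]; omega))
        (mem_lift m4 (by rw [vsize_add_unitv, vsize_add_unitv]; omega))
        (mem_lift m5 (by rw [vsize_add_unitv, vsize_add_unitv]; omega))
        (mem_lift m6 (by rw [vsize_add_unitv, vsize_add_unitv]; omega))
    · have hs1 : s - 1 ≤ vsize x + 2 := by
        have := m1.2.1; rwa [vsize_add_unitv, vsize_add_unitv] at this
      have hup : vsize x + 2 ≤ m' := by
        have := m1.2.2; rwa [vsize_add_unitv, vsize_add_unitv] at this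
      have hxa : ∀ q, x q ≤ a q := fun q =>
        le_trans (le_trans (Nat.le_add_right _ _) (Nat.le_add_right _ _)) (m1.1 q)
      have hxi : x i < a i := by
        have h := m1.1 i
        rw [apply_unitv_ne _ _ _ hik.ne, apply_unitv_self] at h
        omega
      have hxj : x j < a j := by
        have h := m6.1 j
        rw [apply_unitv_ne _ _ _ hjk.ne, apply_unitv_self] at h
        omega
      have hxk : x k < a k := by
        have h := m1.1 k
        rw [apply_unitv_self, apply_unitv_ne _ _ _ hik.ne'] at h
        omega
      have hxl : x l < a l := by
        have h := m2.1 l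
        rw [apply_unitv_self, apply_unitv_ne _ _ _ hjl.ne'] at h
        omega
      set P := Finset.univ.filter (fun q => x q < a q) with hP
      have hlP : l ∈ P := by rw [hP]; exact Finset.mem_filter.mpr ⟨Finset.mem_univ l, hxl⟩
      have hPne : P.Nonempty := ⟨l, hlP⟩
      set p0 := P.max' hPne with hp0def
      have hp0 : x p0 < a p0 := (Finset.mem_filter.mp (P.max'_mem hPne)).2
      have hp0max : ∀ q, p0 < q → ¬ x q < a q := by
        intro q hq hc
        have hqP : q ∈ P := by rw [hP]; exact Finset.mem_filter.mpr ⟨Finset.mem_univ q, hc⟩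
        exact absurd hq (not_lt.mpr (Finset.le_max' _ _ hqP))
      have hlp0 : l ≤ p0 := Finset.le_max' _ _ hlP
      rw [hext_low a f K N s (x + unitv n i + unitv n k)
            (by rw [vsize_add_unitv, vsize_add_unitv]; omega),
          hext_low a f K N s (x + unitv n j + unitv n l)
            (by rw [vsize_add_unitv, vsize_add_unitv]; omega),
          hext_low a f K N s (x + unitv n i + unitv n j)
            (by rw [vsize_add_unitv, vsize_add_unitv]; omega),
          hext_low a f K N s (x + unitv n k + unitv n l)
            (by rw [vsize_add_unitv, vsize_add_unitv]; omega),
          hext_low a f K N s (x + unitv n i + unitv n l)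
            (by rw [vsize_add_unitv, vsize_add_unitv]; omega),
          hext_low a f K N s (x + unitv n j + unitv n k)
            (by rw [vsize_add_unitv, vsize_add_unitv]; omega)]
      rcases eq_or_lt_of_le hlp0 with hl | hl
      · -- p0 = l
        have hp0l : ∀ q, l < q → ¬ x q < a q := by
          intro q hq; exact hp0max q (by rw [← hl]; exact hq)
        have gfree : ∀ u v : Fin n, u < v → v < l →
            gfun a f K N (x + unitv n u + unitv n v) =
              f (x + unitv n u + unitv n v + unitv n l)
                - K * ((N * (n - (l:ℕ)) + x l + 1 : ℕ) : ℝ) := by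
          intro u v huv hvl
          apply gfun_eq
          · rw [apply_unitv_ne _ _ _ hvl.ne', apply_unitv_ne _ _ _ ((huv.trans hvl).ne')]
            exact hxl
          · intro q hq
            rw [apply_unitv_ne _ _ _ (hvl.trans hq).ne',
              apply_unitv_ne _ _ _ ((huv.trans (hvl.trans hq)).ne')]
            exact hp0l q hq
          · rw [apply_unitv_ne _ _ _ hvl.ne', apply_unitv_ne _ _ _ ((huv.trans hvl).ne')]
        have hbase : ∀ q, (x + unitv n l) q ≤ a q := add_unitv_le a _ _ hxa hxl
        have memz : ∀ u v : Fin n, (x + unitv n l) u < a u →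
            ((x + unitv n l + unitv n u) v < a v) →
            x + unitv n l + unitv n u + unitv n v ∈ tbox a s m' := by
          intro u v h1 h2
          refine ⟨add_unitv_le a _ _ (add_unitv_le a _ _ hbase h1) h2, ?_, ?_⟩
          · rw [vsize_add_unitv, vsize_add_unitv, vsize_add_unitv]; omega
          · rw [vsize_add_unitv, vsize_add_unitv, vsize_add_unitv]; omega
        obtain ⟨t, ht1, ht2, ht3⟩ := gfun_eq' a f K N (x + unitv n i + unitv n l)
          ⟨j, by rw [apply_unitv_ne _ _ _ hjl.ne, apply_unitv_ne _ _ _ hij.ne']; exact hxj⟩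
        have htk : k ≤ t := by
          by_contra hcon; push_neg at hcon
          have h2 := ht2 k hcon
          rw [apply_unitv_ne _ _ _ hkl.ne, apply_unitv_ne _ _ _ hik.ne'] at h2
          exact h2 hxk
        have htl : t ≤ l := by
          by_contra hcon; push_neg at hcon
          have h2 := ht1
          rw [apply_unitv_ne _ _ _ hcon.ne', apply_unitv_ne _ _ _ (hil.trans hcon).ne'] at h2
          exact hp0l t hcon h2
        rcases eq_or_lt_of_le htl with htl' | htl'
        · -- t = l
          have hxl1 : x l + 1 < a l := by
            have h2 := ht1
            rw [htl', apply_unitv_self, apply_unitv_ne _ _ _ hil.ne'] at h2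
            exact h2
          have gl : ∀ u : Fin n, u < l →
              gfun a f K N (x + unitv n u + unitv n l) =
                f (x + unitv n u + unitv n l + unitv n l)
                  - K * ((N * (n - (l:ℕ)) + (x l + 1) + 1 : ℕ) : ℝ) := by
            intro u hu
            apply gfun_eq
            · rw [apply_unitv_self, apply_unitv_ne _ _ _ hu.ne']; exact hxl1
            · intro q hq
              rw [apply_unitv_ne _ _ _ hq.ne', apply_unitv_ne _ _ _ ((hu.trans hq).ne')]
              exact hp0l q hq
            · rw [apply_unitv_self, apply_unitv_ne _ _ _ hu.ne']
          have H := hf.2 (x + unitv n l) i j k l hij hjk hkl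
            (memz i k (by rw [apply_unitv_ne _ _ _ hil.ne]; exact hxi)
              (by rw [apply_unitv_ne _ _ _ hik.ne', apply_unitv_ne _ _ _ hkl.ne]; exact hxk))
            (memz j l (by rw [apply_unitv_ne _ _ _ hjl.ne]; exact hxj)
              (by rw [apply_unitv_ne _ _ _ hjl.ne', apply_unitv_self]; exact hxl1))
            (memz i j (by rw [apply_unitv_ne _ _ _ hil.ne]; exact hxi)
              (by rw [apply_unitv_ne _ _ _ hij.ne', apply_unitv_ne _ _ _ hjl.ne]; exact hxj))
            (memz k l (by rw [apply_unitv_ne _ _ _ hkl.ne]; exact hxk)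
              (by rw [apply_unitv_ne _ _ _ hkl.ne', apply_unitv_self]; exact hxl1))
            (memz i l (by rw [apply_unitv_ne _ _ _ hil.ne]; exact hxi)
              (by rw [apply_unitv_ne _ _ _ hil.ne', apply_unitv_self]; exact hxl1))
            (memz j k (by rw [apply_unitv_ne _ _ _ hjl.ne]; exact hxj)
              (by rw [apply_unitv_ne _ _ _ hjk.ne', apply_unitv_ne _ _ _ hkl.ne]; exact hxk))
          rw [show x + unitv n l + unitv n i + unitv n k
                = x + unitv n i + unitv n k + unitv n l from by abel,
              show x + unitv n l + unitv n j + unitv n l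
                = x + unitv n j + unitv n l + unitv n l from by abel,
              show x + unitv n l + unitv n i + unitv n j
                = x + unitv n i + unitv n j + unitv n l from by abel,
              show x + unitv n l + unitv n k + unitv n l
                = x + unitv n k + unitv n l + unitv n l from by abel,
              show x + unitv n l + unitv n i + unitv n l
                = x + unitv n i + unitv n l + unitv n l from by abel,
              show x + unitv n l + unitv n j + unitv n k
                = x + unitv n j + unitv n k + unitv n l from by abel] at H
          rw [gfree i k hik hkl, gl j hjl, gfree i j hij hjl, gl k hkl, gl i hil,
            gfree j k hjk hkl]
          exact shift4 _ _ _ _ _ _ _ _ _ _ _ _ H (by push_cast; ring) (by push_cast; ring)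
        · -- t < l
          have hxl1' : ¬ (x l + 1 < a l) := by
            have h2 := ht2 l htl'
            rw [apply_unitv_self, apply_unitv_ne _ _ _ hil.ne'] at h2
            exact h2
          have hnx : ∀ q, t < q → q ≠ l → ¬ x q < a q := by
            intro q hq hql
            have h2 := ht2 q hq
            rw [apply_unitv_ne _ _ _ hql,
              apply_unitv_ne _ _ _ (((hik.trans_le htk).trans hq).ne')] at h2
            exact h2
          have hmaxul : ∀ u : Fin n, u ≤ k → ∀ q, t < q →
              ¬ (x + unitv n u + unitv n l) q < a q := by
            intro u hu q hq
            by_cases hql : q = l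
            · subst hql
              rw [apply_unitv_self, apply_unitv_ne _ _ _ ((hu.trans_lt hkl).ne')]
              exact hxl1'
            · rw [apply_unitv_ne _ _ _ hql,
                apply_unitv_ne _ _ _ ((((hu.trans htk).trans_lt hq)).ne')]
              exact hnx q hq hql
          rcases eq_or_lt_of_le htk with htk' | htk'
          · -- t = k : middle term dominated
            subst htk'
            have hyilk : (x + unitv n i + unitv n l) k = x k := by
              rw [apply_unitv_ne _ _ _ hkl.ne, apply_unitv_ne _ _ _ hik.ne']
            rw [hyilk] at ht3
            have gjl : gfun a f K N (x + unitv n j + unitv n l) =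
                f (x + unitv n j + unitv n l + unitv n k)
                  - K * ((N * (n - (k:ℕ)) + x k + 1 : ℕ) : ℝ) := by
              apply gfun_eq
              · rw [apply_unitv_ne _ _ _ hkl.ne, apply_unitv_ne _ _ _ hjk.ne']; exact hxk
              · exact hmaxul j hjk.le
              · rw [apply_unitv_ne _ _ _ hkl.ne, apply_unitv_ne _ _ _ hjk.ne']
            obtain ⟨t2, h21, h22, h23⟩ := gfun_eq' a f K N (x + unitv n k + unitv n l)
              ⟨j, by rw [apply_unitv_ne _ _ _ hjl.ne, apply_unitv_ne _ _ _ hjk.ne]; exact hxj⟩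
            have ht2k : t2 ≤ k := by
              by_contra hcon; push_neg at hcon
              exact hmaxul k le_rfl t2 hcon h21
            have hw2 : N * (n - (k:ℕ)) + x k + 1 + 1 ≤
                N * (n - (t2:ℕ)) + (x + unitv n k + unitv n l) t2 + 1 := by
              rcases eq_or_lt_of_le ht2k with he | hlt
              · rw [he, apply_unitv_ne _ _ _ hkl.ne, apply_unitv_self]; omega
              · rw [apply_unitv_ne _ _ _ (hlt.trans hkl).ne, apply_unitv_ne _ _ _ hlt.ne]
                have htv : (t2:ℕ) < (k:ℕ) := hlt
                have hkn : (k:ℕ) < n := k.isLt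
                have hgap : n - (k:ℕ) + 1 ≤ n - (t2:ℕ) := by omega
                have hmul : N * (n - (k:ℕ)) + N ≤ N * (n - (t2:ℕ)) := by
                  calc N * (n - (k:ℕ)) + N = N * (n - (k:ℕ) + 1) := by ring
                    _ ≤ N * (n - (t2:ℕ)) := Nat.mul_le_mul_left N hgap
                have := haN k
                omega
            rw [gfree i k hik hkl, gjl, gfree i j hij hjl, h23, ht3, gfree j k hjk hkl]
            rw [max_eq_right (by
              have hb1 : |f (x + unitv n i + unitv n j + unitv n l)| ≤ Fb :=
                hFb _ (add_unitv_le a _ _ m3.1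
                  (by rw [apply_unitv_ne _ _ _ hjl.ne', apply_unitv_ne _ _ _ hil.ne']
                      exact hxl))
              have hb2 : |f (x + unitv n k + unitv n l + unitv n t2)| ≤ Fb :=
                hFb _ (add_unitv_le a _ _ m4.1 h21)
              have hb3 : |f (x + unitv n i + unitv n l + unitv n k)| ≤ Fb :=
                hFb _ (add_unitv_le a _ _ m5.1
                  (by rw [apply_unitv_ne _ _ _ hkl.ne, apply_unitv_ne _ _ _ hik.ne']
                      exact hxk))
              have hb4 : |f (x + unitv n j + unitv n k + unitv n l)| ≤ Fb :=
                hFb _ (add_unitv_le a _ _ m6.1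
                  (by rw [apply_unitv_ne _ _ _ hkl.ne', apply_unitv_ne _ _ _ hjl.ne']
                      exact hxl))
              have hcast : ((N * (n - (k:ℕ)) + x k + 1 + 1 : ℕ) : ℝ) ≤
                  ((N * (n - (t2:ℕ)) + (x + unitv n k + unitv n l) t2 + 1 : ℕ) : ℝ) :=
                Nat.cast_le.mpr hw2
              have hKmul := mul_le_mul_of_nonneg_left hcast hK0
              rw [abs_le] at hb1 hb2 hb3 hb4
              push_cast at hKmul
              push_cast
              linarith [hb1.2, hb2.2, hb3.1, hb4.1, hFb0])]
            rw [show x + unitv n j + unitv n l + unitv n k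
                  = x + unitv n j + unitv n k + unitv n l from by abel,
                show x + unitv n i + unitv n l + unitv n k
                  = x + unitv n i + unitv n k + unitv n l from by abel]
            ring
          · -- k < t < l
            have hxt : x t < a t := by
              have h2 := ht1
              rw [apply_unitv_ne _ _ _ htl'.ne,
                apply_unitv_ne _ _ _ ((hik.trans htk').ne')] at h2
              exact h2
            have glpt : ∀ u : Fin n, u ≤ k →
                gfun a f K N (x + unitv n u + unitv n l) =
                  f (x + unitv n u + unitv n l + unitv n t)
                    - K * ((N * (n - (t:ℕ)) + x t + 1 : ℕ) : ℝ) := by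
              intro u hu
              apply gfun_eq
              · rw [apply_unitv_ne _ _ _ htl'.ne,
                  apply_unitv_ne _ _ _ ((hu.trans_lt htk').ne')]
                exact hxt
              · exact hmaxul u hu
              · rw [apply_unitv_ne _ _ _ htl'.ne,
                  apply_unitv_ne _ _ _ ((hu.trans_lt htk').ne')]
            have H := hf.2 (x + unitv n l) i j k t hij hjk htk'
              (memz i k (by rw [apply_unitv_ne _ _ _ hil.ne]; exact hxi)
                (by rw [apply_unitv_ne _ _ _ hik.ne', apply_unitv_ne _ _ _ hkl.ne]; exact hxk))
              (memz j t (by rw [apply_unitv_ne _ _ _ hjl.ne]; exact hxj)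
                (by rw [apply_unitv_ne _ _ _ ((hjk.trans htk').ne'),
                      apply_unitv_ne _ _ _ htl'.ne]
                    exact hxt))
              (memz i j (by rw [apply_unitv_ne _ _ _ hil.ne]; exact hxi)
                (by rw [apply_unitv_ne _ _ _ hij.ne', apply_unitv_ne _ _ _ hjl.ne]; exact hxj))
              (memz k t (by rw [apply_unitv_ne _ _ _ hkl.ne]; exact hxk)
                (by rw [apply_unitv_ne _ _ _ htk'.ne', apply_unitv_ne _ _ _ htl'.ne]
                    exact hxt))
              (memz i t (by rw [apply_unitv_ne _ _ _ hil.ne]; exact hxi)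
                (by rw [apply_unitv_ne _ _ _ ((hik.trans htk').ne'),
                      apply_unitv_ne _ _ _ htl'.ne]
                    exact hxt))
              (memz j k (by rw [apply_unitv_ne _ _ _ hjl.ne]; exact hxj)
                (by rw [apply_unitv_ne _ _ _ hjk.ne', apply_unitv_ne _ _ _ hkl.ne]; exact hxk))
            rw [show x + unitv n l + unitv n i + unitv n k
                  = x + unitv n i + unitv n k + unitv n l from by abel,
                show x + unitv n l + unitv n j + unitv n t
                  = x + unitv n j + unitv n l + unitv n t from by abel,
                show x + unitv n l + unitv n i + unitv n j
                  = x + unitv n i + unitv n j + unitv n l from by abel,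
                show x + unitv n l + unitv n k + unitv n t
                  = x + unitv n k + unitv n l + unitv n t from by abel,
                show x + unitv n l + unitv n i + unitv n t
                  = x + unitv n i + unitv n l + unitv n t from by abel,
                show x + unitv n l + unitv n j + unitv n k
                  = x + unitv n j + unitv n k + unitv n l from by abel] at H
            rw [gfree i k hik hkl, glpt j hjk.le, gfree i j hij hjl, glpt k le_rfl,
              glpt i hik.le, gfree j k hjk hkl]
            exact shift4 _ _ _ _ _ _ _ _ _ _ _ _ H (by push_cast; ring) (by push_cast; ring)
      · -- l < p0
        have hru6 : ∀ u v : Fin n, u < v → v < p0 → x u < a u → x v < a v →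
            gfun a f K N (x + unitv n u + unitv n v) =
              f (x + unitv n u + unitv n v + unitv n p0)
                - K * ((N * (n - (p0:ℕ)) + x p0 + 1 : ℕ) : ℝ) := by
          intro u v huv hv hxu hxv
          apply gfun_eq
          · rw [apply_unitv_ne _ _ _ hv.ne', apply_unitv_ne _ _ _ ((huv.trans hv).ne')]
            exact hp0
          · intro q hq
            rw [apply_unitv_ne _ _ _ ((hv.trans hq).ne'),
              apply_unitv_ne _ _ _ (((huv.trans hv).trans hq).ne')]
            exact hp0max q hq
          · rw [apply_unitv_ne _ _ _ hv.ne', apply_unitv_ne _ _ _ ((huv.trans hv).ne')]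
        have hbase : ∀ q, (x + unitv n p0) q ≤ a q := add_unitv_le a _ _ hxa hp0
        have memz : ∀ u v : Fin n, u < v → v < p0 → x u < a u → x v < a v →
            x + unitv n p0 + unitv n u + unitv n v ∈ tbox a s m' := by
          intro u v huv hv hxu hxv
          refine ⟨?_, ?_, ?_⟩
          · refine add_unitv_le a _ _ (add_unitv_le a _ _ hbase ?_) ?_
            · rw [apply_unitv_ne _ _ _ ((huv.trans hv).ne)]; exact hxu
            · rw [apply_unitv_ne _ _ _ huv.ne', apply_unitv_ne _ _ _ hv.ne]; exact hxv
          · rw [vsize_add_unitv, vsize_add_unitv, vsize_add_unitv]; omega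
          · rw [vsize_add_unitv, vsize_add_unitv, vsize_add_unitv]; omega
        have H := hf.2 (x + unitv n p0) i j k l hij hjk hkl
          (memz i k hik (hkl.trans hl) hxi hxk)
          (memz j l hjl hl hxj hxl)
          (memz i j hij ((hjk.trans hkl).trans hl) hxi hxj)
          (memz k l hkl hl hxk hxl)
          (memz i l hil hl hxi hxl)
          (memz j k hjk (hkl.trans hl) hxj hxk)
        rw [show x + unitv n p0 + unitv n i + unitv n k
              = x + unitv n i + unitv n k + unitv n p0 from by abel,
            show x + unitv n p0 + unitv n j + unitv n l
              = x + unitv n j + unitv n l + unitv n p0 from by abel,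
            show x + unitv n p0 + unitv n i + unitv n j
              = x + unitv n i + unitv n j + unitv n p0 from by abel,
            show x + unitv n p0 + unitv n k + unitv n l
              = x + unitv n k + unitv n l + unitv n p0 from by abel,
            show x + unitv n p0 + unitv n i + unitv n l
              = x + unitv n i + unitv n l + unitv n p0 from by abel,
            show x + unitv n p0 + unitv n j + unitv n k
              = x + unitv n j + unitv n k + unitv n p0 from by abel] at H
        rw [hru6 i k hik (hkl.trans hl) hxi hxk, hru6 j l hjl hl hxj hxl,
          hru6 i j hij ((hjk.trans hkl).trans hl) hxi hxj, hru6 k l hkl hl hxk hxl,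
          hru6 i l hil hl hxi hxl, hru6 j k hjk (hkl.trans hl) hxj hxk]
        exact shift4 _ _ _ _ _ _ _ _ _ _ _ _ H rfl rfl
  · intro x hx
    exact hext_high a f K N s x (by have := hx.2.1; omega)
end step

section assembly
variable {n : ℕ}

lemma down_all (a : Fin n → ℕ) (m m' : ℕ) (hmm : m ≤ m')
    (f : (Fin n → ℕ) → ℝ) (hf : IsTP (tbox a m m') f) :
    ∃ g, IsTP (tbox a 0 m') g ∧ ∀ x ∈ tbox a m m', g x = f x := by
  have H : ∀ d : ℕ, ∃ g, IsTP (tbox a (m - d) m') g ∧ ∀ x ∈ tbox a m m', g x = f x := by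
    intro d
    induction d with
    | zero => exact ⟨f, hf, fun _ _ => rfl⟩
    | succ d ih =>
      obtain ⟨g, hg, hag⟩ := ih
      obtain ⟨g', hg', hag'⟩ := step_down a (m - d) m' (le_trans (Nat.sub_le m d) hmm) g hg
      refine ⟨g', ?_, ?_⟩
      · have hh : m - d - 1 = m - (d + 1) := by omega
        rwa [hh] at hg'
      · intro x hx
        rw [hag' x ⟨hx.1, le_trans (Nat.sub_le m d) hx.2.1, hx.2.2⟩, hag x hx]
  obtain ⟨g, h1, h2⟩ := H m
  rw [Nat.sub_self] at h1
  exact ⟨g, h1, h2⟩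

/-- complement within the box -/
def compv (a y : Fin n → ℕ) : Fin n → ℕ := fun q => a q - y q

lemma vsize_compv_add (a y : Fin n → ℕ) (h : ∀ q, y q ≤ a q) :
    vsize (compv a y) + vsize y = vsize a := by
  have hh : compv a y + y = a := funext fun q => Nat.sub_add_cancel (h q)
  calc vsize (compv a y) + vsize y = vsize (compv a y + y) := (vsize_add _ _).symm
    _ = vsize a := by rw [hh]

lemma compv_mem (a : Fin n → ℕ) (A B : ℕ) (y : Fin n → ℕ)
    (hy : y ∈ tbox a A B) : compv a y ∈ tbox a (vsize a - B) (vsize a - A) := by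
  obtain ⟨h1, h2, h3⟩ := hy
  have key := vsize_compv_add a y h1
  exact ⟨fun q => Nat.sub_le _ _, by omega, by omega⟩

lemma compv_shift (a y : Fin n → ℕ) (u : Fin n) (hu : y u < a u) :
    compv a y = compv a (y + unitv n u) + unitv n u := by
  funext q
  simp only [compv, Pi.add_apply, unitv]
  by_cases h : q = u
  · subst h; rw [if_pos rfl]; omega
  · rw [if_neg h]; omega

lemma compv_inv (a y : Fin n → ℕ) (h : ∀ q, y q ≤ a q) : compv a (compv a y) = y := by
  funext q
  have := h q
  simp only [compv]
  omega

end assembly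

section ctp
variable {n : ℕ}

lemma compv_TP (a : Fin n → ℕ) (A B : ℕ) (hAB : A ≤ B) (hB : B ≤ vsize a)
    (f : (Fin n → ℕ) → ℝ) (hf : IsTP (tbox a A B) f) :
    IsTP (tbox a (vsize a - B) (vsize a - A)) (fun y => f (compv a y)) := by
  have hsub1 : vsize a - (vsize a - A) = A := by omega
  have hsub2 : vsize a - (vsize a - B) = B := by omega
  have mk : ∀ w : Fin n → ℕ, w ∈ tbox a (vsize a - B) (vsize a - A) →
      compv a w ∈ tbox a A B := by
    intro w hw
    have := compv_mem a (vsize a - B) (vsize a - A) w hw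
    rwa [hsub1, hsub2] at this
  constructor
  · intro x i j k hij hjk m1 m2 m3 m4 m5 m6
    have hik : i < k := hij.trans hjk
    have hxi : x i < a i := by
      have h := m3.1 i
      rw [apply_unitv_ne _ _ _ hij.ne, apply_unitv_self] at h
      omega
    have hxj : x j < a j := by
      have h := m6.1 j
      rw [apply_unitv_ne _ _ _ hjk.ne, apply_unitv_self] at h
      omega
    have hxk : x k < a k := by
      have h := m1.1 k
      rw [apply_unitv_self, apply_unitv_ne _ _ _ hik.ne'] at h
      omega
    set z := compv a (x + unitv n i + unitv n j + unitv n k) with hz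
    have e1 : compv a (x + unitv n i + unitv n k) = z + unitv n j := by
      rw [hz, show x + unitv n i + unitv n j + unitv n k
            = x + unitv n i + unitv n k + unitv n j from by abel]
      exact compv_shift a _ j (by
        rw [apply_unitv_ne _ _ _ hjk.ne, apply_unitv_ne _ _ _ hij.ne']; exact hxj)
    have e2 : compv a (x + unitv n j) = z + unitv n i + unitv n k := by
      rw [hz, show x + unitv n i + unitv n j + unitv n k
            = x + unitv n j + unitv n k + unitv n i from by abel,
        ← compv_shift a _ i (by
          rw [apply_unitv_ne _ _ _ hik.ne, apply_unitv_ne _ _ _ hij.ne]; exact hxi)]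
      exact compv_shift a _ k (by
        rw [apply_unitv_ne _ _ _ hjk.ne']; exact hxk)
    have e3 : compv a (x + unitv n i + unitv n j) = z + unitv n k := by
      rw [hz]
      exact compv_shift a _ k (by
        rw [apply_unitv_ne _ _ _ hjk.ne', apply_unitv_ne _ _ _ hik.ne']; exact hxk)
    have e4 : compv a (x + unitv n k) = z + unitv n i + unitv n j := by
      rw [hz, show x + unitv n i + unitv n j + unitv n k
            = x + unitv n k + unitv n j + unitv n i from by abel,
        ← compv_shift a _ i (by
          rw [apply_unitv_ne _ _ _ hij.ne, apply_unitv_ne _ _ _ hik.ne]; exact hxi)]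
      exact compv_shift a _ j (by
        rw [apply_unitv_ne _ _ _ hjk.ne]; exact hxj)
    have e5 : compv a (x + unitv n i) = z + unitv n j + unitv n k := by
      rw [hz, show x + unitv n i + unitv n j + unitv n k
            = x + unitv n i + unitv n k + unitv n j from by abel,
        ← compv_shift a _ j (by
          rw [apply_unitv_ne _ _ _ hjk.ne, apply_unitv_ne _ _ _ hij.ne']; exact hxj)]
      exact compv_shift a _ k (by
        rw [apply_unitv_ne _ _ _ hik.ne']; exact hxk)
    have e6 : compv a (x + unitv n j + unitv n k) = z + unitv n i := by
      rw [hz, show x + unitv n i + unitv n j + unitv n k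
            = x + unitv n j + unitv n k + unitv n i from by abel]
      exact compv_shift a _ i (by
        rw [apply_unitv_ne _ _ _ hik.ne, apply_unitv_ne _ _ _ hij.ne]; exact hxi)
    have H := hf.1 z i j k hij hjk (e2 ▸ mk _ m2) (e1 ▸ mk _ m1) (e4 ▸ mk _ m4)
      (e3 ▸ mk _ m3) (e6 ▸ mk _ m6) (e5 ▸ mk _ m5)
    dsimp only
    rw [e1, e2, e3, e4, e5, e6]
    rw [add_comm (f (z + unitv n j)) (f (z + unitv n i + unitv n k)),
      add_comm (f (z + unitv n k)) (f (z + unitv n i + unitv n j)),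
      add_comm (f (z + unitv n j + unitv n k)) (f (z + unitv n i))]
    exact H
  · intro x i j k l hij hjk hkl m1 m2 m3 m4 m5 m6
    have hik : i < k := hij.trans hjk
    have hjl : j < l := hjk.trans hkl
    have hil : i < l := hik.trans hkl
    have hxi : x i < a i := by
      have h := m1.1 i
      rw [apply_unitv_ne _ _ _ hik.ne, apply_unitv_self] at h
      omega
    have hxj : x j < a j := by
      have h := m6.1 j
      rw [apply_unitv_ne _ _ _ hjk.ne, apply_unitv_self] at h
      omega
    have hxk : x k < a k := by
      have h := m1.1 k
      rw [apply_unitv_self, apply_unitv_ne _ _ _ hik.ne'] at h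
      omega
    have hxl : x l < a l := by
      have h := m2.1 l
      rw [apply_unitv_self, apply_unitv_ne _ _ _ hjl.ne'] at h
      omega
    set z := compv a (x + unitv n i + unitv n j + unitv n k + unitv n l) with hz
    have e1 : compv a (x + unitv n i + unitv n k) = z + unitv n j + unitv n l := by
      rw [hz, show x + unitv n i + unitv n j + unitv n k + unitv n l
            = x + unitv n i + unitv n k + unitv n l + unitv n j from by abel,
        ← compv_shift a _ j (by
          rw [apply_unitv_ne _ _ _ hjl.ne, apply_unitv_ne _ _ _ hjk.ne,
            apply_unitv_ne _ _ _ hij.ne']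
          exact hxj)]
      exact compv_shift a _ l (by
        rw [apply_unitv_ne _ _ _ hkl.ne', apply_unitv_ne _ _ _ hil.ne']; exact hxl)
    have e2 : compv a (x + unitv n j + unitv n l) = z + unitv n i + unitv n k := by
      rw [hz, show x + unitv n i + unitv n j + unitv n k + unitv n l
            = x + unitv n j + unitv n l + unitv n k + unitv n i from by abel,
        ← compv_shift a _ i (by
          rw [apply_unitv_ne _ _ _ hik.ne, apply_unitv_ne _ _ _ hil.ne,
            apply_unitv_ne _ _ _ hij.ne]
          exact hxi)]
      exact compv_shift a _ k (by
        rw [apply_unitv_ne _ _ _ hkl.ne, apply_unitv_ne _ _ _ hjk.ne']; exact hxk)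
    have e3 : compv a (x + unitv n i + unitv n j) = z + unitv n k + unitv n l := by
      rw [hz, show x + unitv n i + unitv n j + unitv n k + unitv n l
            = x + unitv n i + unitv n j + unitv n l + unitv n k from by abel,
        ← compv_shift a _ k (by
          rw [apply_unitv_ne _ _ _ hkl.ne, apply_unitv_ne _ _ _ hjk.ne',
            apply_unitv_ne _ _ _ hik.ne']
          exact hxk)]
      exact compv_shift a _ l (by
        rw [apply_unitv_ne _ _ _ hjl.ne', apply_unitv_ne _ _ _ hil.ne']; exact hxl)
    have e4 : compv a (x + unitv n k + unitv n l) = z + unitv n i + unitv n j := by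
      rw [hz, show x + unitv n i + unitv n j + unitv n k + unitv n l
            = x + unitv n k + unitv n l + unitv n j + unitv n i from by abel,
        ← compv_shift a _ i (by
          rw [apply_unitv_ne _ _ _ hij.ne, apply_unitv_ne _ _ _ hil.ne,
            apply_unitv_ne _ _ _ hik.ne]
          exact hxi)]
      exact compv_shift a _ j (by
        rw [apply_unitv_ne _ _ _ hjl.ne, apply_unitv_ne _ _ _ hjk.ne]; exact hxj)
    have e5 : compv a (x + unitv n i + unitv n l) = z + unitv n j + unitv n k := by
      rw [hz, show x + unitv n i + unitv n j + unitv n k + unitv n l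
            = x + unitv n i + unitv n l + unitv n k + unitv n j from by abel,
        ← compv_shift a _ j (by
          rw [apply_unitv_ne _ _ _ hjk.ne, apply_unitv_ne _ _ _ hjl.ne,
            apply_unitv_ne _ _ _ hij.ne']
          exact hxj)]
      exact compv_shift a _ k (by
        rw [apply_unitv_ne _ _ _ hkl.ne, apply_unitv_ne _ _ _ hik.ne']; exact hxk)
    have e6 : compv a (x + unitv n j + unitv n k) = z + unitv n i + unitv n l := by
      rw [hz, show x + unitv n i + unitv n j + unitv n k + unitv n l
            = x + unitv n j + unitv n k + unitv n l + unitv n i from by abel,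
        ← compv_shift a _ i (by
          rw [apply_unitv_ne _ _ _ hil.ne, apply_unitv_ne _ _ _ hik.ne,
            apply_unitv_ne _ _ _ hij.ne]
          exact hxi)]
      exact compv_shift a _ l (by
        rw [apply_unitv_ne _ _ _ hkl.ne', apply_unitv_ne _ _ _ hjl.ne']; exact hxl)
    have H := hf.2 z i j k l hij hjk hkl (e2 ▸ mk _ m2) (e1 ▸ mk _ m1) (e4 ▸ mk _ m4)
      (e3 ▸ mk _ m3) (e6 ▸ mk _ m6) (e5 ▸ mk _ m5)
    dsimp only
    rw [e1, e2, e3, e4, e5, e6]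
    rw [add_comm (f (z + unitv n j + unitv n l)) (f (z + unitv n i + unitv n k)),
      add_comm (f (z + unitv n k + unitv n l)) (f (z + unitv n i + unitv n j)),
      add_comm (f (z + unitv n j + unitv n k)) (f (z + unitv n i + unitv n l))]
    exact H

end ctp

/-- **Extension from a truncated box to the entire box**: every TP-function `f`
on a truncated box `B_m^{m'}(a)` extends to a TP-function `h` on the entire box
`B(a) = B_0^{|a|}(a)`. -/
theorem extend_to_entire_box {n : ℕ} (a : Fin n → ℕ) (ha : ∀ i, 0 < a i)
    (m m' : ℕ) (hmm : m ≤ m') (hm' : m' ≤ vsize a)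
    (f : (Fin n → ℕ) → ℝ) (hf : IsTP (tbox a m m') f) :
    ∃ h : (Fin n → ℕ) → ℝ,
      IsTP (tbox a 0 (vsize a)) h ∧ ∀ x ∈ tbox a m m', h x = f x := by
  obtain ⟨g1, hg1, ha1⟩ := down_all a m m' hmm f hf
  have hg2 := compv_TP a 0 m' (Nat.zero_le _) hm' g1 hg1
  rw [Nat.sub_zero] at hg2
  obtain ⟨g3, hg3, ha3⟩ := down_all a (vsize a - m') (vsize a) (Nat.sub_le _ _) _ hg2
  have hg4 := compv_TP a 0 (vsize a) (Nat.zero_le _) le_rfl g3 hg3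
  rw [Nat.sub_zero, Nat.sub_self] at hg4
  refine ⟨fun y => g3 (compv a y), hg4, ?_⟩
  intro x hx
  have hcx : compv a x ∈ tbox a (vsize a - m') (vsize a) := by
    have hh := compv_mem a m m' x hx
    exact ⟨hh.1, hh.2.1, le_trans hh.2.2 (Nat.sub_le _ _)⟩
  have h1 := ha3 (compv a x) hcx
  dsimp only at h1 ⊢
  rw [h1, compv_inv a x hx.1]
  exact ha1 x hx
end

section
/- Submodularity propagates from the standard basis: Let f be a TP-function on a box B(a). Then f is submodular (i.e., f(x+1_i)+f(x+1_j) ≥ f(x)+f(x+1_i+1_j) for all x and i ≠ j with all four vectors in B(a)) if and only if f is submodular on the standard basis Int(a), meaning this inequality holds whenever i ≠ j and all four vectors occurring in it belong to Int(a). -/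
/-- `f` is submodular on the set `S`:
`f(x+1_i)+f(x+1_j) ≥ f(x)+f(x+1_i+1_j)` whenever `i ≠ j` and all four vectors
occurring in the inequality belong to `S`. -/
def SubmodOn {n : ℕ} (S : Set (Fin n → ℕ)) (f : (Fin n → ℕ) → ℝ) : Prop :=
  ∀ (x : Fin n → ℕ) (i j : Fin n), i ≠ j →
    x ∈ S → x + unitv n i ∈ S → x + unitv n j ∈ S → x + unitv n i + unitv n j ∈ S →
    f x + f (x + unitv n i + unitv n j) ≤ f (x + unitv n i) + f (x + unitv n j)

/-- `f` is skew-submodular on the set `S`: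
`f(x+1_i+1_j)+f(x+1_j) ≥ f(x+1_i)+f(x+2·1_j)` whenever `i ≠ j` and all four
vectors occurring in the inequality belong to `S`. -/
def SkewSubmodOn {n : ℕ} (S : Set (Fin n → ℕ)) (f : (Fin n → ℕ) → ℝ) : Prop :=
  ∀ (x : Fin n → ℕ) (i j : Fin n), i ≠ j →
    x + unitv n i ∈ S → x + unitv n j ∈ S →
    x + unitv n i + unitv n j ∈ S → x + unitv n j + unitv n j ∈ S →
    f (x + unitv n i) + f (x + unitv n j + unitv n j) ≤
      f (x + unitv n i + unitv n j) + f (x + unitv n j)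

/-- The standard basis `Int(a)` of the entire box: all fuzzy-intervals together
with the zero vector. -/
def intSet {n : ℕ} (a : Fin n → ℕ) : Set (Fin n → ℕ) := {x | IsFint a x ∨ x = 0}

namespace SubmodAux

variable {n : ℕ}

lemma mem_tbox {a x : Fin n → ℕ} : x ∈ tbox a 0 (vsize a) ↔ ∀ i, x i ≤ a i := by
  constructor
  · exact fun h => h.1
  · intro h
    exact ⟨h, Nat.zero_le _, Finset.sum_le_sum fun i _ => h i⟩

/-- interior-of-hull defect -/
def Phi (a x : Fin n → ℕ) (i j : Fin n) : ℕ :=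
  ∑ q, if (i < q ∨ ∃ p, p < q ∧ 0 < x p) ∧ (q < j ∨ ∃ p, q < p ∧ 0 < x p)
       then a q - x q else 0

def meas (a x : Fin n → ℕ) (i j : Fin n) : ℕ := Phi a x i j * (n + 1) + (j.val - i.val)

lemma meas_lt_of_Phi_lt {a x z : Fin n → ℕ} {i j i' j' : Fin n}
    (h : Phi a z i' j' < Phi a x i j) : meas a z i' j' < meas a x i j := by
  unfold meas
  have h2 : (Phi a z i' j' + 1) * (n + 1) ≤ Phi a x i j * (n + 1) :=
    Nat.mul_le_mul_right _ h
  have h3 : (j'.val - i'.val) < n + 1 := by have := j'.isLt; omega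
  calc Phi a z i' j' * (n + 1) + (j'.val - i'.val)
      < Phi a z i' j' * (n + 1) + (n + 1) := Nat.add_lt_add_left h3 _
    _ = (Phi a z i' j' + 1) * (n + 1) := by ring
    _ ≤ Phi a x i j * (n + 1) := h2
    _ ≤ _ := Nat.le_add_right _ _

lemma Phi_pair_mono {a x : Fin n → ℕ} {i j i' j' : Fin n}
    (hi : i' ≤ i) (hj : j ≤ j') : Phi a x i j ≤ Phi a x i' j' := by
  apply Finset.sum_le_sum
  intro q _
  split_ifs with h1 h2
  · exact le_rfl
  · exact absurd ⟨h1.1.imp (fun hh => lt_of_le_of_lt hi hh) id,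
      h1.2.imp (fun hh => lt_of_lt_of_le hh hj) id⟩ h2
  · exact Nat.zero_le _
  · exact Nat.zero_le _

lemma meas_lt_split {a x : Fin n → ℕ} {i j i' j' : Fin n}
    (hP : Phi a x i' j' ≤ Phi a x i j) (hlen : j'.val - i'.val < j.val - i.val) :
    meas a x i' j' < meas a x i j := by
  unfold meas
  have h2 : Phi a x i' j' * (n + 1) ≤ Phi a x i j * (n + 1) := Nat.mul_le_mul_right _ hP
  omega

lemma Phi_keyR {a x : Fin n → ℕ} {i j t : Fin n} (hij : i < j) (hjt : j < t)
    (hxt : 0 < x t) (hmax : ∀ s, t < s → x s = 0) (hxj : x j < a j) :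
    Phi a (fun s => if s = t then x t - 1 else if s = j then x j + 1 else x s) i t
      < Phi a x i j := by
  set z : Fin n → ℕ := fun s => if s = t then x t - 1 else if s = j then x j + 1 else x s
    with hz
  have hjt' : (j : Fin n) ≠ t := ne_of_lt hjt
  have hzj : z j = x j + 1 := by simp [hz, hjt']
  have hzo : ∀ s, s ≠ t → s ≠ j → z s = x s := by intro s h1 h2; simp [hz, h1, h2]
  have hCxj : ((i < j ∨ ∃ p, p < j ∧ 0 < x p) ∧ (j < j ∨ ∃ p, j < p ∧ 0 < x p)) :=
    ⟨Or.inl hij, Or.inr ⟨t, hjt, hxt⟩⟩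
  unfold Phi
  apply Finset.sum_lt_sum
  · intro q _
    rcases eq_or_ne q t with rfl | hqt
    · rw [if_neg]
      · exact Nat.zero_le _
      · rintro ⟨-, h2⟩
        rcases h2 with h2 | ⟨p, hp, hzp⟩
        · exact lt_irrefl _ h2
        · rw [hzo p (ne_of_gt hp) (ne_of_gt (lt_trans hjt hp)), hmax p hp] at hzp
          exact lt_irrefl 0 hzp
    · rcases eq_or_ne q j with rfl | hqj
      · rw [if_pos hCxj]
        split_ifs with h1
        · rw [hzj]; omega
        · omega
      · rw [hzo q hqt hqj]
        have himp : ((i < q ∨ ∃ p, p < q ∧ 0 < z p) ∧ (q < t ∨ ∃ p, q < p ∧ 0 < z p)) →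
            ((i < q ∨ ∃ p, p < q ∧ 0 < x p) ∧ (q < j ∨ ∃ p, q < p ∧ 0 < x p)) := by
          rintro ⟨hL, hRt⟩
          constructor
          · rcases hL with h | ⟨p, hp, hzp⟩
            · exact Or.inl h
            · rcases eq_or_ne p t with rfl | hpt
              · exact Or.inr ⟨p, hp, hxt⟩
              · rcases eq_or_ne p j with rfl | hpj
                · exact Or.inl (lt_trans hij hp)
                · exact Or.inr ⟨p, hp, by rwa [hzo p hpt hpj] at hzp⟩
          · rcases hRt with h | ⟨p, hp, hzp⟩
            · exact Or.inr ⟨t, h, hxt⟩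
            · rcases eq_or_ne p t with rfl | hpt
              · exact Or.inr ⟨p, hp, hxt⟩
              · rcases eq_or_ne p j with rfl | hpj
                · exact Or.inl hp
                · exact Or.inr ⟨p, hp, by rwa [hzo p hpt hpj] at hzp⟩
        split_ifs with h1 h2
        · exact le_rfl
        · exact absurd (himp h1) h2
        · exact Nat.zero_le _
        · exact Nat.zero_le _
  · refine ⟨j, Finset.mem_univ j, ?_⟩
    rw [if_pos hCxj]
    split_ifs with h1
    · rw [hzj]; omega
    · omega

lemma Phi_keyL {a x : Fin n → ℕ} {i j t : Fin n} (hti : t < i) (hij : i < j)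
    (hxt : 0 < x t) (hmin : ∀ s, s < t → x s = 0) (hxi : x i < a i) :
    Phi a (fun s => if s = t then x t - 1 else if s = i then x i + 1 else x s) t j
      < Phi a x i j := by
  set z : Fin n → ℕ := fun s => if s = t then x t - 1 else if s = i then x i + 1 else x s
    with hz
  have hit' : (i : Fin n) ≠ t := ne_of_gt hti
  have hzi : z i = x i + 1 := by simp [hz, hit']
  have hzo : ∀ s, s ≠ t → s ≠ i → z s = x s := by intro s h1 h2; simp [hz, h1, h2]
  have hCxi : ((i < i ∨ ∃ p, p < i ∧ 0 < x p) ∧ (i < j ∨ ∃ p, i < p ∧ 0 < x p)) :=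
    ⟨Or.inr ⟨t, hti, hxt⟩, Or.inl hij⟩
  unfold Phi
  apply Finset.sum_lt_sum
  · intro q _
    rcases eq_or_ne q t with rfl | hqt
    · rw [if_neg]
      · exact Nat.zero_le _
      · rintro ⟨h1, -⟩
        rcases h1 with h1 | ⟨p, hp, hzp⟩
        · exact lt_irrefl _ h1
        · rw [hzo p (ne_of_lt hp) (ne_of_lt (lt_trans hp hti)), hmin p hp] at hzp
          exact lt_irrefl 0 hzp
    · rcases eq_or_ne q i with rfl | hqi
      · rw [if_pos hCxi]
        split_ifs with h1
        · rw [hzi]; omega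
        · omega
      · rw [hzo q hqt hqi]
        have himp : ((t < q ∨ ∃ p, p < q ∧ 0 < z p) ∧ (q < j ∨ ∃ p, q < p ∧ 0 < z p)) →
            ((i < q ∨ ∃ p, p < q ∧ 0 < x p) ∧ (q < j ∨ ∃ p, q < p ∧ 0 < x p)) := by
          rintro ⟨hL, hR⟩
          constructor
          · rcases hL with h | ⟨p, hp, hzp⟩
            · exact Or.inr ⟨t, h, hxt⟩
            · rcases eq_or_ne p t with rfl | hpt
              · exact Or.inr ⟨p, hp, hxt⟩
              · rcases eq_or_ne p i with rfl | hpi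
                · exact Or.inl hp
                · exact Or.inr ⟨p, hp, by rwa [hzo p hpt hpi] at hzp⟩
          · rcases hR with h | ⟨p, hp, hzp⟩
            · exact Or.inl h
            · rcases eq_or_ne p t with rfl | hpt
              · exact Or.inr ⟨p, hp, hxt⟩
              · rcases eq_or_ne p i with rfl | hpi
                · exact Or.inl (lt_trans hp hij)
                · exact Or.inr ⟨p, hp, by rwa [hzo p hpt hpi] at hzp⟩
        split_ifs with h1 h2
        · exact le_rfl
        · exact absurd (himp h1) h2
        · exact Nat.zero_le _
        · exact Nat.zero_le _
  · refine ⟨i, Finset.mem_univ i, ?_⟩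
    rw [if_pos hCxi]
    split_ifs with h1
    · rw [hzi]; omega
    · omega

end SubmodAux

namespace SubmodAux

variable {n : ℕ}

lemma le_pt1 {a x : Fin n → ℕ} (hxa : ∀ s, x s ≤ a s) {i : Fin n} (hxi : x i < a i) :
    ∀ s, (x + unitv n i) s ≤ a s := by
  intro s
  rcases eq_or_ne s i with rfl | h
  · simp [unitv]; omega
  · simp [unitv, h]; exact hxa s

lemma le_pt2 {a x : Fin n → ℕ} (hxa : ∀ s, x s ≤ a s) {i j : Fin n}
    (hxi : x i < a i) (hxj : x j < a j) (hij : i ≠ j) :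
    ∀ s, (x + unitv n i + unitv n j) s ≤ a s := by
  intro s
  rcases eq_or_ne s i with rfl | h1
  · simp [unitv, hij]; omega
  · rcases eq_or_ne s j with rfl | h2
    · simp [unitv, h1]; omega
    · simp [unitv, h1, h2]; exact hxa s

lemma le_add_of_le {x y w : Fin n → ℕ} (h : ∀ s, y s ≤ x s) :
    ∀ s, (y + w) s ≤ (x + w) s := fun s => Nat.add_le_add_right (h s) _

lemma hcond_gen {a x w : Fin n → ℕ} {i j : Fin n} (hij : i < j)
    (hmid : ∀ q, i < q → q < j → x q = a q)
    (hlow : ∀ s, s < i → x s = 0) (hhigh : ∀ s, j < s → x s = 0)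
    (hw : ∀ s, s ≠ i → s ≠ j → w s = x s) :
    ∀ p q r : Fin n, p < q → q < r → w p ≠ 0 → w r ≠ 0 → w q = a q := by
  intro p q r hpq hqr hp hr
  have hpi : i ≤ p := by
    by_contra h
    push_neg at h
    exact hp (by rw [hw p (ne_of_lt h) (ne_of_lt (lt_trans h hij))]; exact hlow p h)
  have hrj : r ≤ j := by
    by_contra h
    push_neg at h
    exact hr (by rw [hw r (ne_of_gt (lt_trans hij h)) (ne_of_gt h)]; exact hhigh r h)
  have hiq : i < q := lt_of_le_of_lt hpi hpq
  have hqj : q < j := lt_of_lt_of_le hqr hrj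
  rw [hw q (ne_of_gt hiq) (ne_of_lt hqj)]
  exact hmid q hiq hqj

lemma mem_intSet_of {a w : Fin n → ℕ} (hw : ∀ s, w s ≤ a s)
    (hcond : ∀ p q r : Fin n, p < q → q < r → w p ≠ 0 → w r ≠ 0 → w q = a q) :
    w ∈ intSet a := by
  by_cases h0 : w = 0
  · exact Or.inr h0
  · exact Or.inl ⟨hw, h0, hcond⟩

end SubmodAux

namespace SubmodAux

lemma main {n : ℕ} (a : Fin n → ℕ) (f : (Fin n → ℕ) → ℝ)
    (hf3 : TP3 (tbox a 0 (vsize a)) f) (hb : SubmodOn (intSet a) f) :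
    ∀ (N : ℕ) (x : Fin n → ℕ) (i j : Fin n), i < j →
      (∀ s, x s ≤ a s) → x i < a i → x j < a j →
      meas a x i j ≤ N →
      f x + f (x + unitv n i + unitv n j) ≤ f (x + unitv n i) + f (x + unitv n j) := by
  intro N
  induction N using Nat.strong_induction_on with
  | _ N IH =>
  intro x i j hij hxa hxi hxj hN
  by_cases hR : ∃ t, j < t ∧ 0 < x t
  · -- absorb the rightmost outer unit
    obtain ⟨t0, ht0⟩ := hR
    have hSne : (Finset.univ.filter (fun s => j < s ∧ 0 < x s)).Nonempty :=
      ⟨t0, by simp [ht0.1, ht0.2]⟩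
    set t := (Finset.univ.filter (fun s => j < s ∧ 0 < x s)).max' hSne with ht
    have htmem := Finset.max'_mem _ hSne
    rw [← ht, Finset.mem_filter] at htmem
    have htj : j < t := htmem.2.1
    have hxt : 0 < x t := htmem.2.2
    have hmax : ∀ s, t < s → x s = 0 := by
      intro s hs
      by_contra hxs
      have hmem : s ∈ Finset.univ.filter (fun s => j < s ∧ 0 < x s) := by
        simp [lt_trans htj hs, Nat.pos_of_ne_zero hxs]
      exact absurd (Finset.le_max' _ s hmem) (not_le.mpr hs)
    have hit : i < t := lt_trans hij htj
    have hti' : (t : Fin n) ≠ i := ne_of_gt hit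
    have htj' : (t : Fin n) ≠ j := ne_of_gt htj
    have hij' : (i : Fin n) ≠ j := ne_of_lt hij
    set y : Fin n → ℕ := fun s => if s = t then x t - 1 else x s with hy
    have hy_le : ∀ s, y s ≤ x s := by
      intro s
      rcases eq_or_ne s t with rfl | h
      · simp [hy]
      · simp [hy, h]
    have e1 : y + unitv n t = x := by
      funext s
      simp only [Pi.add_apply, hy, unitv]
      rcases eq_or_ne s t with rfl | h
      · simp; omega
      · simp [h]
    have e2 : y + unitv n i + unitv n t = x + unitv n i := by
      rw [add_right_comm, e1]
    have e3 : y + unitv n j + unitv n t = x + unitv n j := by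
      rw [add_right_comm, e1]
    have mx : x ∈ tbox a 0 (vsize a) := mem_tbox.mpr hxa
    have mxi : x + unitv n i ∈ tbox a 0 (vsize a) := mem_tbox.mpr (le_pt1 hxa hxi)
    have mxj : x + unitv n j ∈ tbox a 0 (vsize a) := mem_tbox.mpr (le_pt1 hxa hxj)
    have myj : ∀ s, (y + unitv n j) s ≤ a s :=
      fun s => le_trans (le_add_of_le hy_le s) (le_pt1 hxa hxj s)
    have myi : ∀ s, (y + unitv n i) s ≤ a s :=
      fun s => le_trans (le_add_of_le hy_le s) (le_pt1 hxa hxi s)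
    have myij : ∀ s, (y + unitv n i + unitv n j) s ≤ a s := fun s =>
      le_trans (le_add_of_le (le_add_of_le hy_le) s) (le_pt2 hxa hxi hxj hij' s)
    have hTP := hf3 y i j t hij htj
      (by rw [e2]; exact mxi) (mem_tbox.mpr myj) (mem_tbox.mpr myij)
      (by rw [e1]; exact mx) (mem_tbox.mpr myi) (by rw [e3]; exact mxj)
    rw [e1, e2, e3] at hTP
    have E1 : f (y + unitv n i + unitv n j) + f x
        ≤ f (x + unitv n i) + f (y + unitv n j) := by
      rw [hTP]; exact le_max_left _ _
    have hyji : (y + unitv n j) i < a i := by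
      have hv : (y + unitv n j) i = x i := by
        simp [Pi.add_apply, hy, unitv, hij', hti'.symm]
      rw [hv]; exact hxi
    have hyjt : (y + unitv n j) t < a t := by
      have hv : (y + unitv n j) t = x t - 1 := by
        simp [Pi.add_apply, hy, unitv, htj']
      rw [hv]; have := hxa t; omega
    have hfun : y + unitv n j
        = (fun s => if s = t then x t - 1 else if s = j then x j + 1 else x s) := by
      funext s
      simp only [Pi.add_apply, hy, unitv]
      rcases eq_or_ne s t with rfl | h1
      · simp [htj']
      · rcases eq_or_ne s j with rfl | h2
        · simp [h1]
        · simp [h1, h2]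
    have hPhi : Phi a (y + unitv n j) i t < Phi a x i j := by
      rw [hfun]; exact Phi_keyR hij htj hxt hmax hxj
    have hms : meas a (y + unitv n j) i t < N :=
      lt_of_lt_of_le (meas_lt_of_Phi_lt hPhi) hN
    have H := IH _ hms (y + unitv n j) i t hit myj hyji hyjt le_rfl
    rw [add_right_comm y (unitv n j) (unitv n i)] at H
    rw [add_right_comm (y + unitv n i) (unitv n j) (unitv n t)] at H
    rw [e2, e3] at H
    linarith [E1, H]
  · by_cases hL : ∃ t, t < i ∧ 0 < x t
    · -- absorb the leftmost outer unit
      obtain ⟨t0, ht0⟩ := hL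
      have hSne : (Finset.univ.filter (fun s => s < i ∧ 0 < x s)).Nonempty :=
        ⟨t0, by simp [ht0.1, ht0.2]⟩
      set t := (Finset.univ.filter (fun s => s < i ∧ 0 < x s)).min' hSne with ht
      have htmem := Finset.min'_mem _ hSne
      rw [← ht, Finset.mem_filter] at htmem
      have hti : t < i := htmem.2.1
      have hxt : 0 < x t := htmem.2.2
      have hmin : ∀ s, s < t → x s = 0 := by
        intro s hs
        by_contra hxs
        have hmem : s ∈ Finset.univ.filter (fun s => s < i ∧ 0 < x s) := by
          simp [lt_trans hs hti, Nat.pos_of_ne_zero hxs]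
        exact absurd (Finset.min'_le _ s hmem) (not_le.mpr hs)
      have htj : t < j := lt_trans hti hij
      have hti' : (t : Fin n) ≠ i := ne_of_lt hti
      have htj'' : (t : Fin n) ≠ j := ne_of_lt htj
      have hij' : (i : Fin n) ≠ j := ne_of_lt hij
      have hji' : (j : Fin n) ≠ i := ne_of_gt hij
      have hjt' : (j : Fin n) ≠ t := ne_of_gt htj
      set y : Fin n → ℕ := fun s => if s = t then x t - 1 else x s with hy
      have hy_le : ∀ s, y s ≤ x s := by
        intro s
        rcases eq_or_ne s t with rfl | h
        · simp [hy]
        · simp [hy, h]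
      have e1 : y + unitv n t = x := by
        funext s
        simp only [Pi.add_apply, hy, unitv]
        rcases eq_or_ne s t with rfl | h
        · simp; omega
        · simp [h]
      have mx : x ∈ tbox a 0 (vsize a) := mem_tbox.mpr hxa
      have mxi : x + unitv n i ∈ tbox a 0 (vsize a) := mem_tbox.mpr (le_pt1 hxa hxi)
      have mxj : x + unitv n j ∈ tbox a 0 (vsize a) := mem_tbox.mpr (le_pt1 hxa hxj)
      have myi : ∀ s, (y + unitv n i) s ≤ a s :=
        fun s => le_trans (le_add_of_le hy_le s) (le_pt1 hxa hxi s)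
      have myj : ∀ s, (y + unitv n j) s ≤ a s :=
        fun s => le_trans (le_add_of_le hy_le s) (le_pt1 hxa hxj s)
      have myij : ∀ s, (y + unitv n i + unitv n j) s ≤ a s := fun s =>
        le_trans (le_add_of_le (le_add_of_le hy_le) s) (le_pt2 hxa hxi hxj hij' s)
      have hTP := hf3 y t i j hti hij
        (by rw [e1]; exact mxj) (mem_tbox.mpr myi) (by rw [e1]; exact mxi)
        (mem_tbox.mpr myj) (by rw [e1]; exact mx) (mem_tbox.mpr myij)
      rw [e1] at hTP
      have E2 : f x + f (y + unitv n i + unitv n j)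
          ≤ f (x + unitv n j) + f (y + unitv n i) := by
        rw [hTP]; exact le_max_right _ _
      have hyit : (y + unitv n i) t < a t := by
        have hv : (y + unitv n i) t = x t - 1 := by
          simp [Pi.add_apply, hy, unitv, hti']
        rw [hv]; have := hxa t; omega
      have hyij : (y + unitv n i) j < a j := by
        have hv : (y + unitv n i) j = x j := by
          simp [Pi.add_apply, hy, unitv, hji', hjt']
        rw [hv]; exact hxj
      have hfun : y + unitv n i
          = (fun s => if s = t then x t - 1 else if s = i then x i + 1 else x s) := by
        funext s
        simp only [Pi.add_apply, hy, unitv]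
        rcases eq_or_ne s t with rfl | h1
        · simp [hti']
        · rcases eq_or_ne s i with rfl | h2
          · simp [h1]
          · simp [h1, h2]
      have hPhi : Phi a (y + unitv n i) t j < Phi a x i j := by
        rw [hfun]; exact Phi_keyL hti hij hxt hmin hxi
      have hms : meas a (y + unitv n i) t j < N :=
        lt_of_lt_of_le (meas_lt_of_Phi_lt hPhi) hN
      have H := IH _ hms (y + unitv n i) t j htj myi hyit hyij le_rfl
      rw [add_right_comm y (unitv n i) (unitv n t), e1] at H
      linarith [E2, H]
    · by_cases hQ : ∃ q, i < q ∧ q < j ∧ x q < a q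
      · -- split at a middle defect
        obtain ⟨q, hiq, hqj, hq⟩ := hQ
        have hij' : (i : Fin n) ≠ j := ne_of_lt hij
        have hiq' : (i : Fin n) ≠ q := ne_of_lt hiq
        have hqj' : (q : Fin n) ≠ j := ne_of_lt hqj
        have mx : x ∈ tbox a 0 (vsize a) := mem_tbox.mpr hxa
        have mxi := mem_tbox.mpr (le_pt1 hxa hxi)
        have mxj := mem_tbox.mpr (le_pt1 hxa hxj)
        have mxq := mem_tbox.mpr (le_pt1 hxa hq)
        have mxij := mem_tbox.mpr (le_pt2 hxa hxi hxj hij')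
        have mxiq := mem_tbox.mpr (le_pt2 hxa hxi hq hiq')
        have mxqj := mem_tbox.mpr (le_pt2 hxa hq hxj hqj')
        have hTP := hf3 x i q j hiq hqj mxij mxq mxiq mxj mxi mxqj
        have hv1 : i.val < q.val := hiq
        have hv2 : q.val < j.val := hqj
        have hmi : meas a x i q < N := by
          apply lt_of_lt_of_le _ hN
          apply meas_lt_split (Phi_pair_mono le_rfl (le_of_lt hqj))
          omega
        have hmj : meas a x q j < N := by
          apply lt_of_lt_of_le _ hN
          apply meas_lt_split (Phi_pair_mono (le_of_lt hiq) le_rfl)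
          omega
        rcases max_choice (f (x + unitv n i + unitv n q) + f (x + unitv n j))
            (f (x + unitv n i) + f (x + unitv n q + unitv n j)) with hc | hc
        · rw [hc] at hTP
          have H := IH _ hmi x i q hiq hxa hxi hq le_rfl
          linarith [hTP, H]
        · rw [hc] at hTP
          have H := IH _ hmj x q j hqj hxa hq hxj le_rfl
          linarith [hTP, H]
      · -- basic instance: all four points are fints (or zero)
        push_neg at hR hL hQ
        have hhigh : ∀ s, j < s → x s = 0 := by
          intro s hs; have := hR s hs; omega
        have hlow : ∀ s, s < i → x s = 0 := by
          intro s hs; have := hL s hs; omega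
        have hmid : ∀ q, i < q → q < j → x q = a q := fun q h1 h2 =>
          le_antisymm (hxa q) (hQ q h1 h2)
        have hij' : (i : Fin n) ≠ j := ne_of_lt hij
        have m1 : x ∈ intSet a :=
          mem_intSet_of hxa (hcond_gen hij hmid hlow hhigh (fun s _ _ => rfl))
        have m2 : x + unitv n i ∈ intSet a := by
          apply mem_intSet_of (le_pt1 hxa hxi)
          apply hcond_gen hij hmid hlow hhigh
          intro s h1 h2
          simp [unitv, h1]
        have m3 : x + unitv n j ∈ intSet a := by
          apply mem_intSet_of (le_pt1 hxa hxj)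
          apply hcond_gen hij hmid hlow hhigh
          intro s h1 h2
          simp [unitv, h2]
        have m4 : x + unitv n i + unitv n j ∈ intSet a := by
          apply mem_intSet_of (le_pt2 hxa hxi hxj hij')
          apply hcond_gen hij hmid hlow hhigh
          intro s h1 h2
          simp [unitv, h1, h2]
        exact hb x i j hij' m1 m2 m3 m4

end SubmodAux

namespace SubmodAux

lemma intSet_subset_tbox {n : ℕ} {a : Fin n → ℕ} :
    intSet a ⊆ tbox a 0 (vsize a) := by
  rintro w (hw | rfl)
  · exact mem_tbox.mpr hw.1
  · exact mem_tbox.mpr (fun s => by simp)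

end SubmodAux


/-- **Submodularity propagates from the standard basis** (Theorem 3): a
TP-function `f` on a box `B(a)` is submodular if and only if it is submodular
on the standard basis `Int(a)`. -/
theorem submodular_iff_on_basis {n : ℕ} (a : Fin n → ℕ) (ha : ∀ i, 0 < a i)
    (f : (Fin n → ℕ) → ℝ) (hf : IsTP (tbox a 0 (vsize a)) f) :
    SubmodOn (tbox a 0 (vsize a)) f ↔ SubmodOn (intSet a) f := by
  constructor
  · intro h x i j hij m1 m2 m3 m4
    exact h x i j hij (SubmodAux.intSet_subset_tbox m1) (SubmodAux.intSet_subset_tbox m2)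
      (SubmodAux.intSet_subset_tbox m3) (SubmodAux.intSet_subset_tbox m4)
  · intro hb x i j hij m1 m2 m3 m4
    have hxa : ∀ s, x s ≤ a s := m1.1
    have hxi : x i < a i := by
      have h2 := m2.1 i
      simp [unitv, Pi.add_apply] at h2
      omega
    have hxj : x j < a j := by
      have h3 := m3.1 j
      simp [unitv, Pi.add_apply] at h3
      omega
    rcases hij.lt_or_gt with h | h
    · exact SubmodAux.main a f hf.1 hb (SubmodAux.meas a x i j) x i j h hxa hxi hxj le_rfl
    · have H := SubmodAux.main a f hf.1 hb (SubmodAux.meas a x j i) x j i h hxa hxj hxi le_rfl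
      rw [add_right_comm x (unitv n j) (unitv n i)] at H
      linarith [H]
end

section
/- Skew-submodularity propagates from the standard basis: A TP-function f on a box B(a) is skew-submodular (i.e., f(x+1_i+1_j)+f(x+1_j) ≥ f(x+1_i)+f(x+2·1_j) for all x and i ≠ j with all four vectors in B(a)) if and only if its restriction to the standard basis Int(a) is skew-submodular, meaning this inequality holds whenever i ≠ j and the four vectors occurring in it belong to Int(a). Furthermore, a skew-submodular TP-function f on B(a) satisfies the additional relations f(x+1_i+1_j)+f(x+1_j+1_k) ≥ f(x+1_i+1_k)+f(x+2·1_j) for all pairwise distinct i, j, k such that all four vectors lie in B(a). -/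
namespace SkewAux

variable {n : ℕ}

lemma unitv_apply (q p : Fin n) : unitv n q p = if p = q then 1 else 0 := rfl

lemma vsize_mono {x y : Fin n → ℕ} (h : ∀ p, x p ≤ y p) : vsize x ≤ vsize y :=
  Finset.sum_le_sum fun p _ => h p

lemma mem_box {a z : Fin n → ℕ} : z ∈ tbox a 0 (vsize a) ↔ ∀ p, z p ≤ a p := by
  constructor
  · exact fun h => h.1
  · intro h; exact ⟨h, Nat.zero_le _, vsize_mono h⟩

lemma vsize_add_unitv (x : Fin n → ℕ) (q : Fin n) :
    vsize (x + unitv n q) = vsize x + 1 := by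
  simp [vsize, unitv, Finset.sum_add_distrib]

lemma tp3' {a : Fin n → ℕ} {f : (Fin n → ℕ) → ℝ} (hf : TP3 (tbox a 0 (vsize a)) f)
    {x : Fin n → ℕ} {p q r : Fin n} (hpq : p < q) (hqr : q < r)
    (hx : ∀ s, x s ≤ a s) (hp : x p < a p) (hq : x q < a q) (hr : x r < a r) :
    f (x + unitv n p + unitv n r) + f (x + unitv n q) =
      max (f (x + unitv n p + unitv n q) + f (x + unitv n r))
          (f (x + unitv n p) + f (x + unitv n q + unitv n r)) := by
  have h1 : p ≠ q := ne_of_lt hpq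
  have h2 : q ≠ r := ne_of_lt hqr
  have h3 : p ≠ r := ne_of_lt (hpq.trans hqr)
  apply hf x p q r hpq hqr <;>
  · rw [mem_box]
    intro s
    have h0 := hx s
    simp only [Pi.add_apply, unitv_apply]
    rcases eq_or_ne s p with rfl | hsp <;> rcases eq_or_ne s q with rfl | hsq <;>
      rcases eq_or_ne s r with rfl | hsr <;> simp_all <;> omega

end SkewAux
namespace SkewAux

variable {n : ℕ}

/-- Reduction 1: shift the first index toward `j` through a non-full coordinate. -/
lemma L_R1 {a : Fin n → ℕ} {f : (Fin n → ℕ) → ℝ} (hf : TP3 (tbox a 0 (vsize a)) f)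
    {x : Fin n → ℕ} {i j m : Fin n}
    (hbet : (i < m ∧ m < j) ∨ (j < m ∧ m < i))
    (hx : ∀ p, x p ≤ a p) (hxi : x i < a i) (hxm : x m < a m) (hxj : x j + 2 ≤ a j)
    (hGm : f (x + unitv n m) + f (x + unitv n j + unitv n j) ≤
            f (x + unitv n m + unitv n j) + f (x + unitv n j)) :
    f (x + unitv n i) + f (x + unitv n j + unitv n j) ≤
      f (x + unitv n i + unitv n j) + f (x + unitv n j) := by
  have hxj' : x j < a j := by omega
  rcases hbet with ⟨h1, h2⟩ | ⟨h1, h2⟩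
  · have htp := tp3' hf h1 h2 hx hxi hxm hxj'
    rw [show x + unitv n m + unitv n j = x + unitv n m + unitv n j from rfl] at htp
    have hd1 : f (x + unitv n i + unitv n m) + f (x + unitv n j) ≤
        f (x + unitv n i + unitv n j) + f (x + unitv n m) := by
      rw [htp]; exact le_max_left _ _
    have hd2 : f (x + unitv n i) + f (x + unitv n m + unitv n j) ≤
        f (x + unitv n i + unitv n j) + f (x + unitv n m) := by
      rw [htp]; exact le_max_right _ _
    rcases max_choice (f (x + unitv n i + unitv n m) + f (x + unitv n j))
        (f (x + unitv n i) + f (x + unitv n m + unitv n j)) with hc | hc <;>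
      rw [hc] at htp <;> linarith
  · have htp := tp3' hf h1 h2 hx hxj' hxm hxi
    rw [show x + unitv n j + unitv n i = x + unitv n i + unitv n j from by abel,
        show x + unitv n j + unitv n m = x + unitv n m + unitv n j from by abel,
        show x + unitv n m + unitv n i = x + unitv n i + unitv n m from by abel] at htp
    have hd1 : f (x + unitv n m + unitv n j) + f (x + unitv n i) ≤
        f (x + unitv n i + unitv n j) + f (x + unitv n m) := by
      rw [htp]; exact le_max_left _ _
    have hd2 : f (x + unitv n j) + f (x + unitv n i + unitv n m) ≤
        f (x + unitv n i + unitv n j) + f (x + unitv n m) := by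
      rw [htp]; exact le_max_right _ _
    rcases max_choice (f (x + unitv n m + unitv n j) + f (x + unitv n i))
        (f (x + unitv n j) + f (x + unitv n i + unitv n m)) with hc | hc <;>
      rw [hc] at htp <;> linarith

/-- From two skew-submodular inequalities at the same base, derive the additional
relation `f(x+1_i+1_k)+f(x+2·1_j) ≤ f(x+1_i+1_j)+f(x+1_j+1_k)`. -/
lemma L_L1 {a : Fin n → ℕ} {f : (Fin n → ℕ) → ℝ} (hf : TP3 (tbox a 0 (vsize a)) f)
    {x : Fin n → ℕ} {i j k : Fin n}
    (hij : i ≠ j) (hjk : j ≠ k) (hik : i ≠ k)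
    (hx : ∀ p, x p ≤ a p) (hxi : x i < a i) (hxk : x k < a k) (hxj : x j + 2 ≤ a j)
    (hGi : f (x + unitv n i) + f (x + unitv n j + unitv n j) ≤
            f (x + unitv n i + unitv n j) + f (x + unitv n j))
    (hGk : f (x + unitv n k) + f (x + unitv n j + unitv n j) ≤
            f (x + unitv n k + unitv n j) + f (x + unitv n j)) :
    f (x + unitv n i + unitv n k) + f (x + unitv n j + unitv n j) ≤
      f (x + unitv n i + unitv n j) + f (x + unitv n j + unitv n k) := by
  have hxj' : x j < a j := by omega
  rw [show x + unitv n k + unitv n j = x + unitv n j + unitv n k from by abel] at hGk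
  rcases lt_trichotomy i j with hij' | hij' | hij'
  · rcases lt_trichotomy j k with hjk' | hjk' | hjk'
    · -- i < j < k
      have htp := tp3' hf hij' hjk' hx hxi hxj' hxk
      have hd1 : f (x + unitv n i + unitv n j) + f (x + unitv n k) ≤
          f (x + unitv n i + unitv n k) + f (x + unitv n j) := by
        rw [htp]; exact le_max_left _ _
      have hd2 : f (x + unitv n i) + f (x + unitv n j + unitv n k) ≤
          f (x + unitv n i + unitv n k) + f (x + unitv n j) := by
        rw [htp]; exact le_max_right _ _
      rcases max_choice (f (x + unitv n i + unitv n j) + f (x + unitv n k))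
          (f (x + unitv n i) + f (x + unitv n j + unitv n k)) with hc | hc <;>
        rw [hc] at htp <;> linarith
    · exact absurd hjk' hjk
    · rcases lt_trichotomy i k with hik' | hik' | hik'
      · -- i < k < j
        have htp := tp3' hf hik' hjk' hx hxi hxk hxj'
        rw [show x + unitv n k + unitv n j = x + unitv n j + unitv n k from by abel] at htp
        have hd1 : f (x + unitv n i + unitv n k) + f (x + unitv n j) ≤
            f (x + unitv n i + unitv n j) + f (x + unitv n k) := by
          rw [htp]; exact le_max_left _ _
        have hd2 : f (x + unitv n i) + f (x + unitv n j + unitv n k) ≤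
            f (x + unitv n i + unitv n j) + f (x + unitv n k) := by
          rw [htp]; exact le_max_right _ _
        rcases max_choice (f (x + unitv n i + unitv n k) + f (x + unitv n j))
            (f (x + unitv n i) + f (x + unitv n j + unitv n k)) with hc | hc <;>
          rw [hc] at htp <;> linarith
      · exact absurd hik' hik
      · -- k < i < j
        have htp := tp3' hf hik' hij' hx hxk hxi hxj'
        rw [show x + unitv n k + unitv n j = x + unitv n j + unitv n k from by abel,
            show x + unitv n k + unitv n i = x + unitv n i + unitv n k from by abel] at htp
        have hd1 : f (x + unitv n i + unitv n k) + f (x + unitv n j) ≤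
            f (x + unitv n j + unitv n k) + f (x + unitv n i) := by
          rw [htp]; exact le_max_left _ _
        have hd2 : f (x + unitv n k) + f (x + unitv n i + unitv n j) ≤
            f (x + unitv n j + unitv n k) + f (x + unitv n i) := by
          rw [htp]; exact le_max_right _ _
        rcases max_choice (f (x + unitv n i + unitv n k) + f (x + unitv n j))
            (f (x + unitv n k) + f (x + unitv n i + unitv n j)) with hc | hc <;>
          rw [hc] at htp <;> linarith
  · exact absurd hij' hij
  · rcases lt_trichotomy i k with hik' | hik' | hik'
    · -- j < i < k
      have htp := tp3' hf hij' hik' hx hxj' hxi hxk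
      rw [show x + unitv n j + unitv n i = x + unitv n i + unitv n j from by abel] at htp
      have hd1 : f (x + unitv n i + unitv n j) + f (x + unitv n k) ≤
          f (x + unitv n j + unitv n k) + f (x + unitv n i) := by
        rw [htp]; exact le_max_left _ _
      have hd2 : f (x + unitv n j) + f (x + unitv n i + unitv n k) ≤
          f (x + unitv n j + unitv n k) + f (x + unitv n i) := by
        rw [htp]; exact le_max_right _ _
      rcases max_choice (f (x + unitv n i + unitv n j) + f (x + unitv n k))
          (f (x + unitv n j) + f (x + unitv n i + unitv n k)) with hc | hc <;>
        rw [hc] at htp <;> linarith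
    · exact absurd hik' hik
    · rcases lt_trichotomy k j with hkj' | hkj' | hkj'
      · -- k < j < i
        have htp := tp3' hf hkj' hij' hx hxk hxj' hxi
        rw [show x + unitv n k + unitv n i = x + unitv n i + unitv n k from by abel,
            show x + unitv n k + unitv n j = x + unitv n j + unitv n k from by abel,
            show x + unitv n j + unitv n i = x + unitv n i + unitv n j from by abel] at htp
        have hd1 : f (x + unitv n j + unitv n k) + f (x + unitv n i) ≤
            f (x + unitv n i + unitv n k) + f (x + unitv n j) := by
          rw [htp]; exact le_max_left _ _
        have hd2 : f (x + unitv n k) + f (x + unitv n i + unitv n j) ≤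
            f (x + unitv n i + unitv n k) + f (x + unitv n j) := by
          rw [htp]; exact le_max_right _ _
        rcases max_choice (f (x + unitv n j + unitv n k) + f (x + unitv n i))
            (f (x + unitv n k) + f (x + unitv n i + unitv n j)) with hc | hc <;>
          rw [hc] at htp <;> linarith
      · exact absurd hkj' (Ne.symm hjk)
      · -- j < k < i
        have htp := tp3' hf hkj' hik' hx hxj' hxk hxi
        rw [show x + unitv n j + unitv n i = x + unitv n i + unitv n j from by abel,
            show x + unitv n k + unitv n i = x + unitv n i + unitv n k from by abel] at htp
        have hd1 : f (x + unitv n j + unitv n k) + f (x + unitv n i) ≤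
            f (x + unitv n i + unitv n j) + f (x + unitv n k) := by
          rw [htp]; exact le_max_left _ _
        have hd2 : f (x + unitv n j) + f (x + unitv n i + unitv n k) ≤
            f (x + unitv n i + unitv n j) + f (x + unitv n k) := by
          rw [htp]; exact le_max_right _ _
        rcases max_choice (f (x + unitv n j + unitv n k) + f (x + unitv n i))
            (f (x + unitv n j) + f (x + unitv n i + unitv n k)) with hc | hc <;>
          rw [hc] at htp <;> linarith
    
end SkewAux
namespace SkewAux

variable {n : ℕ}

/-- Removing an outer support coordinate `k` lying on the opposite side of `j` from `i`. -/
lemma L_L2a {a : Fin n → ℕ} {f : (Fin n → ℕ) → ℝ} (hf : TP3 (tbox a 0 (vsize a)) f)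
    {y : Fin n → ℕ} {i j k : Fin n}
    (hbet : (i < j ∧ j < k) ∨ (k < j ∧ j < i))
    (hy : ∀ p, y p ≤ a p) (hyi : y i < a i) (hyk : y k < a k) (hyj : y j + 2 ≤ a j)
    (hG' : f (y + unitv n i + unitv n k) + f (y + unitv n j + unitv n j) ≤
            f (y + unitv n i + unitv n j) + f (y + unitv n j + unitv n k)) :
    f (y + unitv n k + unitv n i) + f (y + unitv n k + unitv n j + unitv n j) ≤
      f (y + unitv n k + unitv n i + unitv n j) + f (y + unitv n k + unitv n j) := by
  have hij : i ≠ j := by rcases hbet with ⟨h1, _⟩ | ⟨_, h2⟩; exacts [ne_of_lt h1, Ne.symm (ne_of_lt h2)]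
  have hkj : k ≠ j := by rcases hbet with ⟨_, h2⟩ | ⟨h1, _⟩; exacts [Ne.symm (ne_of_lt h2), ne_of_lt h1]
  rw [show y + unitv n k + unitv n i + unitv n j = y + unitv n i + unitv n j + unitv n k from by abel,
      show y + unitv n k + unitv n j + unitv n j = y + unitv n j + unitv n j + unitv n k from by abel,
      show y + unitv n k + unitv n i = y + unitv n i + unitv n k from by abel,
      show y + unitv n k + unitv n j = y + unitv n j + unitv n k from by abel]
  have hz : ∀ p, (y + unitv n j) p ≤ a p := by
    intro p
    rcases eq_or_ne p j with rfl | hpj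
    · simp [Pi.add_apply, unitv_apply]; omega
    · simp only [Pi.add_apply, unitv_apply, if_neg hpj]; simpa using hy p
  have hzi : (y + unitv n j) i < a i := by
    simpa [Pi.add_apply, unitv_apply, hij] using hyi
  have hzk : (y + unitv n j) k < a k := by
    simpa [Pi.add_apply, unitv_apply, hkj] using hyk
  have hzj : (y + unitv n j) j < a j := by
    simp [Pi.add_apply, unitv_apply]; omega
  rcases hbet with ⟨h1, h2⟩ | ⟨h1, h2⟩
  · -- i < j < k
    have htp := tp3' hf h1 h2 hz hzi hzj hzk
    rw [show y + unitv n j + unitv n i = y + unitv n i + unitv n j from by abel] at htp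
    have hd2 : f (y + unitv n i + unitv n j) + f (y + unitv n j + unitv n j + unitv n k) ≤
        f (y + unitv n i + unitv n j + unitv n k) + f (y + unitv n j + unitv n j) := by
      rw [htp]; exact le_max_right _ _
    linarith
  · -- k < j < i
    have htp := tp3' hf h1 h2 hz hzk hzj hzi
    rw [show y + unitv n j + unitv n k + unitv n i = y + unitv n i + unitv n j + unitv n k from by abel,
        show y + unitv n j + unitv n k + unitv n j = y + unitv n j + unitv n j + unitv n k from by abel,
        show y + unitv n j + unitv n i = y + unitv n i + unitv n j from by abel,
        show y + unitv n j + unitv n j + unitv n i = y + unitv n i + unitv n j + unitv n j from by abel] at htp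
    have hd1 : f (y + unitv n j + unitv n j + unitv n k) + f (y + unitv n i + unitv n j) ≤
        f (y + unitv n i + unitv n j + unitv n k) + f (y + unitv n j + unitv n j) := by
      rw [htp]; exact le_max_left _ _
    linarith

/-- Removing an outer support coordinate `k` lying on the same side of `j` as `i`
(beyond `i`); here the auxiliary instance with `i` moved into the base is needed. -/
lemma L_L2b {a : Fin n → ℕ} {f : (Fin n → ℕ) → ℝ} (hf : TP3 (tbox a 0 (vsize a)) f)
    {y : Fin n → ℕ} {i j k : Fin n}
    (hbet : (j < i ∧ i < k) ∨ (k < i ∧ i < j))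
    (hy : ∀ p, y p ≤ a p) (hyi : y i < a i) (hyk : y k < a k) (hyj : y j + 2 ≤ a j)
    (hG' : f (y + unitv n i + unitv n k) + f (y + unitv n j + unitv n j) ≤
            f (y + unitv n i + unitv n j) + f (y + unitv n j + unitv n k))
    (hGaux : f (y + unitv n i + unitv n k) + f (y + unitv n i + unitv n j + unitv n j) ≤
             f (y + unitv n i + unitv n j + unitv n k) + f (y + unitv n i + unitv n j)) :
    f (y + unitv n k + unitv n i) + f (y + unitv n k + unitv n j + unitv n j) ≤
      f (y + unitv n k + unitv n i + unitv n j) + f (y + unitv n k + unitv n j) := by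
  have hij : i ≠ j := by rcases hbet with ⟨h1, _⟩ | ⟨_, h2⟩; exacts [Ne.symm (ne_of_lt h1), ne_of_lt h2]
  have hkj : k ≠ j := by
    rcases hbet with ⟨h1, h2⟩ | ⟨h1, h2⟩; exacts [Ne.symm (ne_of_lt (h1.trans h2)), ne_of_lt (h1.trans h2)]
  rw [show y + unitv n k + unitv n i + unitv n j = y + unitv n i + unitv n j + unitv n k from by abel,
      show y + unitv n k + unitv n j + unitv n j = y + unitv n j + unitv n j + unitv n k from by abel,
      show y + unitv n k + unitv n i = y + unitv n i + unitv n k from by abel,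
      show y + unitv n k + unitv n j = y + unitv n j + unitv n k from by abel]
  have hz : ∀ p, (y + unitv n j) p ≤ a p := by
    intro p
    rcases eq_or_ne p j with rfl | hpj
    · simp [Pi.add_apply, unitv_apply]; omega
    · simp only [Pi.add_apply, unitv_apply, if_neg hpj]; simpa using hy p
  have hzi : (y + unitv n j) i < a i := by
    simpa [Pi.add_apply, unitv_apply, hij] using hyi
  have hzk : (y + unitv n j) k < a k := by
    simpa [Pi.add_apply, unitv_apply, hkj] using hyk
  have hzj : (y + unitv n j) j < a j := by
    simp [Pi.add_apply, unitv_apply]; omega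
  rcases hbet with ⟨h1, h2⟩ | ⟨h1, h2⟩
  · -- j < i < k
    have htp := tp3' hf h1 h2 hz hzj hzi hzk
    rw [show y + unitv n j + unitv n j + unitv n i = y + unitv n i + unitv n j + unitv n j from by abel,
        show y + unitv n j + unitv n i = y + unitv n i + unitv n j from by abel,
        show y + unitv n j + unitv n j + unitv n k = y + unitv n j + unitv n j + unitv n k from rfl] at htp
    rcases max_choice (f (y + unitv n i + unitv n j + unitv n j) + f (y + unitv n j + unitv n k))
        (f (y + unitv n j + unitv n j) + f (y + unitv n i + unitv n j + unitv n k)) with hc | hc <;>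
      rw [hc] at htp <;> linarith
  · -- k < i < j
    have htp := tp3' hf h1 h2 hz hzk hzi hzj
    rw [show y + unitv n j + unitv n k + unitv n j = y + unitv n j + unitv n j + unitv n k from by abel,
        show y + unitv n j + unitv n i = y + unitv n i + unitv n j from by abel,
        show y + unitv n j + unitv n k + unitv n i = y + unitv n i + unitv n j + unitv n k from by abel,
        show y + unitv n j + unitv n k = y + unitv n j + unitv n k from rfl] at htp
    rcases max_choice (f (y + unitv n i + unitv n j + unitv n k) + f (y + unitv n j + unitv n j))
        (f (y + unitv n j + unitv n k) + f (y + unitv n i + unitv n j + unitv n j)) with hc | hc <;>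
      rw [hc] at htp <;> linarith

end SkewAux
namespace SkewAux

variable {n : ℕ}

lemma isFint_aux {a w : Fin n → ℕ} {i j : Fin n}
    (hw : ∀ p, w p ≤ a p)
    (hsup : ∀ p, w p ≠ 0 → min i j ≤ p ∧ p ≤ max i j)
    (hfull : ∀ m, min i j < m → m < max i j → w m = a m)
    (hne : w ≠ 0) : IsFint a w := by
  refine ⟨hw, hne, ?_⟩
  intro p q r hpq hqr hp hr
  exact hfull q (lt_of_le_of_lt (hsup p hp).1 hpq) (lt_of_lt_of_le hqr (hsup r hr).2)

/-- Base case: all four vectors are fints, so the hypothesis on the standard basis applies. -/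
lemma L_base {a : Fin n → ℕ} {f : (Fin n → ℕ) → ℝ} (hb : SkewSubmodOn (intSet a) f)
    {x : Fin n → ℕ} {i j : Fin n} (hij : i ≠ j)
    (hx : ∀ p, x p ≤ a p) (hxi : x i < a i) (hxj : x j + 2 ≤ a j)
    (hfull : ∀ m, min i j < m → m < max i j → x m = a m)
    (hsupp : ∀ p, x p ≠ 0 → min i j ≤ p ∧ p ≤ max i j) :
    f (x + unitv n i) + f (x + unitv n j + unitv n j) ≤
      f (x + unitv n i + unitv n j) + f (x + unitv n j) := by
  have hmini : min i j ≤ i := min_le_left _ _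
  have hminj : min i j ≤ j := min_le_right _ _
  have hmaxi : i ≤ max i j := le_max_left _ _
  have hmaxj : j ≤ max i j := le_max_right _ _
  have key : ∀ w : Fin n → ℕ, (∀ p, w p ≤ a p) → (∀ p, p ≠ i → p ≠ j → w p = x p) →
      (w i ≠ 0 ∨ w j ≠ 0) → w ∈ intSet a := by
    intro w hw hcoord hnz
    left
    refine isFint_aux (i := i) (j := j) hw ?_ ?_ ?_
    · intro p hp
      by_cases h1 : p = i
      · subst h1; exact ⟨hmini, hmaxi⟩
      by_cases h2 : p = j
      · subst h2; exact ⟨hminj, hmaxj⟩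
      · refine hsupp p ?_
        rw [← hcoord p h1 h2]; exact hp
    · intro m h1 h2
      have hmi : m ≠ i := by
        intro h; rw [h] at h1 h2
        rcases le_or_gt i j with h' | h'
        · rw [min_eq_left h'] at h1; exact lt_irrefl _ h1
        · rw [max_eq_left h'.le] at h2; exact lt_irrefl _ h2
      have hmj : m ≠ j := by
        intro h; rw [h] at h1 h2
        rcases le_or_gt i j with h' | h'
        · rw [max_eq_right h'] at h2; exact lt_irrefl _ h2
        · rw [min_eq_right h'.le] at h1; exact lt_irrefl _ h1
      rw [hcoord m hmi hmj]
      exact hfull m h1 h2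
    · intro h0
      rcases hnz with h | h
      · exact h (by rw [h0]; rfl)
      · exact h (by rw [h0]; rfl)
  refine hb x i j hij ?_ ?_ ?_ ?_
  · refine key _ (fun p => ?_) (fun p h1 h2 => ?_) (Or.inl ?_)
    · rcases eq_or_ne p i with rfl | hpi
      · simp [Pi.add_apply, unitv_apply]; omega
      · simp [Pi.add_apply, unitv_apply, hpi]; exact hx p
    · simp [Pi.add_apply, unitv_apply, h1]
    · simp [Pi.add_apply, unitv_apply]
  · refine key _ (fun p => ?_) (fun p h1 h2 => ?_) (Or.inr ?_)
    · rcases eq_or_ne p j with rfl | hpj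
      · simp [Pi.add_apply, unitv_apply]; omega
      · simp [Pi.add_apply, unitv_apply, hpj]; exact hx p
    · simp [Pi.add_apply, unitv_apply, h2]
    · simp [Pi.add_apply, unitv_apply]
  · refine key _ (fun p => ?_) (fun p h1 h2 => ?_) (Or.inl ?_)
    · rcases eq_or_ne p i with rfl | hpi
      · simp [Pi.add_apply, unitv_apply, hij]; omega
      · rcases eq_or_ne p j with rfl | hpj
        · simp [Pi.add_apply, unitv_apply, hpi]; omega
        · simp [Pi.add_apply, unitv_apply, hpi, hpj]; exact hx p
    · simp [Pi.add_apply, unitv_apply, h1, h2]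
    · simp [Pi.add_apply, unitv_apply, hij]
  · refine key _ (fun p => ?_) (fun p h1 h2 => ?_) (Or.inr ?_)
    · rcases eq_or_ne p j with rfl | hpj
      · simp [Pi.add_apply, unitv_apply]; omega
      · simp [Pi.add_apply, unitv_apply, hpj]; exact hx p
    · simp [Pi.add_apply, unitv_apply, h2]
    · simp [Pi.add_apply, unitv_apply]

/-- distance between two indices -/
def dst (i j : Fin n) : ℕ := (i.val - j.val) + (j.val - i.val)

/-- weighted size used as secondary induction measure -/
def phi (j : Fin n) (v : Fin n → ℕ) : ℕ := ∑ p, v p * dst p j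

/-- the induction measure -/
def mu (a x : Fin n → ℕ) (i j : Fin n) : ℕ :=
  vsize x * (n * vsize a + n + 1) ^ 2 + phi j (x + unitv n i) * (n * vsize a + n + 1) +
    (n - dst i j)

lemma dst_lt (p j : Fin n) : dst p j < n := by
  have h1 := p.isLt; have h2 := j.isLt
  unfold dst; omega

lemma phi_lt {a : Fin n → ℕ} {v : Fin n → ℕ} (j : Fin n) (hv : ∀ p, v p ≤ a p) :
    phi j v < n * vsize a + n + 1 := by
  have h : phi j v ≤ n * vsize a := by
    unfold phi
    calc ∑ p, v p * dst p j ≤ ∑ p, a p * n :=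
          Finset.sum_le_sum fun p _ =>
            Nat.mul_le_mul (hv p) (le_of_lt (dst_lt p j))
      _ = vsize a * n := by rw [vsize, Finset.sum_mul]
      _ = n * vsize a := Nat.mul_comm _ _
  omega

lemma phi_add_unitv (j : Fin n) (x : Fin n → ℕ) (q : Fin n) :
    phi j (x + unitv n q) = phi j x + dst q j := by
  unfold phi
  simp [Pi.add_apply, unitv_apply, add_mul, Finset.sum_add_distrib, ite_mul]

end SkewAux
namespace SkewAux

variable {n : ℕ}

lemma tail_lt (a : Fin n → ℕ) (i j : Fin n) : n - dst i j < n * vsize a + n + 1 :=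
  Nat.lt_succ_of_le (le_trans (Nat.sub_le _ _) (Nat.le_add_left _ _))

lemma arith2 {B s p1 p2 t1 t2 : ℕ} (hp : p2 < p1) (ht : t2 < B) :
    s + p2 * B + t2 < s + p1 * B + t1 := by
  have h1 : p2 * B + B ≤ p1 * B := by
    have h := Nat.mul_le_mul_right B hp
    rwa [Nat.succ_mul] at h
  have h2 : (0:ℕ) ≤ t1 := Nat.zero_le _
  linarith

lemma arith1 {B s1 s2 p1 p2 t1 t2 : ℕ} (hs : s2 < s1) (hp : p2 < B) (ht : t2 < B) :
    s2 * B ^ 2 + p2 * B + t2 < s1 * B ^ 2 + p1 * B + t1 := by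
  have e : B ^ 2 = B * B := sq B
  have h1 : p2 * B + B ≤ B * B := by
    have h := Nat.mul_le_mul_right B hp
    rwa [Nat.succ_mul] at h
  have h2 : s2 * (B * B) + B * B ≤ s1 * (B * B) := by
    have h := Nat.mul_le_mul_right (B * B) hs
    rwa [Nat.succ_mul] at h
  rw [e]
  have h3 : (0:ℕ) ≤ p1 * B := Nat.zero_le _
  have h4 : (0:ℕ) ≤ t1 := Nat.zero_le _
  linarith

lemma mu_alpha {a x y : Fin n → ℕ} {i j k : Fin n} (hyx : y + unitv n k = x)
    (hvy : vsize y + 1 = vsize x) (hd : dst i j < dst k j) :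
    mu a (y + unitv n i) k j < mu a x i j := by
  unfold mu
  rw [vsize_add_unitv y i, hvy,
      show y + unitv n i + unitv n k = y + unitv n k + unitv n i from by abel, hyx]
  have h2 := dst_lt i j
  exact Nat.add_lt_add_left (by omega) _

/-- The main propagation: skew-submodularity on `Int(a)` gives the skew-submodular
inequality at every point of the box, by well-founded induction on `mu`. -/
lemma main {a : Fin n → ℕ} {f : (Fin n → ℕ) → ℝ} (ha : ∀ p, 0 < a p)
    (hf : TP3 (tbox a 0 (vsize a)) f) (hb : SkewSubmodOn (intSet a) f) :
    ∀ (N : ℕ) (x : Fin n → ℕ) (i j : Fin n), mu a x i j ≤ N → i ≠ j →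
      (∀ p, x p ≤ a p) → x i < a i → x j + 2 ≤ a j →
      f (x + unitv n i) + f (x + unitv n j + unitv n j) ≤
        f (x + unitv n i + unitv n j) + f (x + unitv n j) := by
  intro N
  induction N with
  | zero =>
    intro x i j hmu hij _ _ _
    exfalso
    have h1 : n - dst i j ≤ 0 := le_trans (Nat.le_add_left _ _) hmu
    have h2 := dst_lt i j
    omega
  | succ N IH =>
    intro x i j hmu hij hx hxi hxj
    by_cases hAm : ∃ m, ((i < m ∧ m < j) ∨ (j < m ∧ m < i)) ∧ x m < a m
    · -- Reduction 1: shift i toward j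
      obtain ⟨m, hbet, hxm⟩ := hAm
      have hmj : m ≠ j := by
        rcases hbet with ⟨_, h⟩ | ⟨h, _⟩
        exacts [ne_of_lt h, Ne.symm (ne_of_lt h)]
      have hmu' : mu a x m j < mu a x i j := by
        have hd : dst m j < dst i j := by
          rcases hbet with ⟨h1, h2⟩ | ⟨h1, h2⟩ <;>
            (rw [Fin.lt_def] at h1 h2; unfold dst; omega)
        have hphi : phi j (x + unitv n m) < phi j (x + unitv n i) := by
          rw [phi_add_unitv, phi_add_unitv]; omega
        unfold mu
        exact arith2 hphi (tail_lt a m j)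
      exact L_R1 hf hbet hx hxi hxm hxj (IH x m j (by omega) hmj hx hxm hxj)
    · by_cases hS : ∃ k, x k ≠ 0 ∧ (k < min i j ∨ max i j < k)
      · -- Remove an outer support coordinate k
        obtain ⟨k, hk0, hkout⟩ := hS
        have hki : k ≠ i := by
          rcases hkout with h | h
          · exact ne_of_lt (lt_of_lt_of_le h (min_le_left _ _))
          · exact Ne.symm (ne_of_lt (lt_of_le_of_lt (le_max_left i j) h))
        have hkj : k ≠ j := by
          rcases hkout with h | h
          · exact ne_of_lt (lt_of_lt_of_le h (min_le_right _ _))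
          · exact Ne.symm (ne_of_lt (lt_of_le_of_lt (le_max_right i j) h))
        obtain ⟨y, hyx⟩ : ∃ y : Fin n → ℕ, y + unitv n k = x := by
          refine ⟨fun p => x p - if p = k then 1 else 0, ?_⟩
          funext p
          simp only [Pi.add_apply, unitv_apply]
          rcases eq_or_ne p k with rfl | hpk
          · have : x p ≠ 0 := hk0
            simp only [if_pos]; omega
          · simp [hpk]
        have hco : ∀ p, y p + (if p = k then 1 else 0) = x p := by
          intro p
          have h := congrFun hyx p
          simpa [Pi.add_apply, unitv_apply] using h
        have hyp : ∀ p, y p ≤ a p := by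
          intro p
          have h1 := hco p; have h2 := hx p
          split_ifs at h1 <;> omega
        have hyi : y i < a i := by
          have h1 := hco i
          rw [if_neg (Ne.symm hki)] at h1; omega
        have hyk : y k < a k := by
          have h1 := hco k
          rw [if_pos rfl] at h1
          have h2 := hx k; omega
        have hyj : y j + 2 ≤ a j := by
          have h1 := hco j
          rw [if_neg (Ne.symm hkj)] at h1; omega
        have hvy : vsize y + 1 = vsize x := by
          rw [← hyx, vsize_add_unitv]
        have hbyi : ∀ p, (y + unitv n i) p ≤ a p := by
          intro p
          simp only [Pi.add_apply, unitv_apply]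
          rcases eq_or_ne p i with rfl | hpi
          · rw [if_pos rfl]; omega
          · rw [if_neg hpi]; simpa using hyp p
        have hbyk : ∀ p, (y + unitv n k) p ≤ a p := by
          intro p; rw [hyx]; exact hx p
        -- the two smaller skew-submodular instances at base y
        have hGyi : f (y + unitv n i) + f (y + unitv n j + unitv n j) ≤
            f (y + unitv n i + unitv n j) + f (y + unitv n j) := by
          refine IH y i j ?_ hij hyp hyi hyj
          have hlt : mu a y i j < mu a x i j := by
            unfold mu
            exact arith1 (by omega) (phi_lt j hbyi) (tail_lt a i j)
          omega
        have hGyk : f (y + unitv n k) + f (y + unitv n j + unitv n j) ≤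
            f (y + unitv n k + unitv n j) + f (y + unitv n j) := by
          refine IH y k j ?_ hkj hyp hyk hyj
          have hlt : mu a y k j < mu a x i j := by
            unfold mu
            exact arith1 (by omega) (phi_lt j hbyk) (tail_lt a k j)
          omega
        have hG' := L_L1 hf hij (Ne.symm hkj) (Ne.symm hki) hyp hyi hyk hyj hGyi hGyk
        rw [← hyx]
        rcases hkout with hklt | hkgt
        · rcases lt_or_gt_of_ne hij with hij' | hij'
          · -- k < i < j : same side, need auxiliary instance
            have hki' : k < i := lt_of_lt_of_le hklt (by rw [min_eq_left hij'.le])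
            have hGaux : f (y + unitv n i + unitv n k) +
                f (y + unitv n i + unitv n j + unitv n j) ≤
                f (y + unitv n i + unitv n j + unitv n k) +
                f (y + unitv n i + unitv n j) := by
              have hb2 : (y + unitv n i) k < a k := by
                simp only [Pi.add_apply, unitv_apply, if_neg hki]; simpa using hyk
              have hb3 : (y + unitv n i) j + 2 ≤ a j := by
                simp only [Pi.add_apply, unitv_apply, if_neg (Ne.symm hij)]; simpa using hyj
              have hmu2 : mu a (y + unitv n i) k j < mu a x i j := by
                refine mu_alpha hyx hvy ?_
                rw [Fin.lt_def] at hki' hij'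
                unfold dst; omega
              have h := IH (y + unitv n i) k j (by omega) hkj hbyi hb2 hb3
              rwa [show y + unitv n i + unitv n k + unitv n j =
                  y + unitv n i + unitv n j + unitv n k from by abel] at h
            exact L_L2b hf (Or.inr ⟨hki', hij'⟩) hyp hyi hyk hyj hG' hGaux
          · -- k < j < i : opposite sides
            have hkj' : k < j := lt_of_lt_of_le hklt (by rw [min_eq_right hij'.le])
            exact L_L2a hf (Or.inr ⟨hkj', hij'⟩) hyp hyi hyk hyj hG'
        · rcases lt_or_gt_of_ne hij with hij' | hij'
          · -- i < j < k : opposite sides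
            have hjk' : j < k := lt_of_le_of_lt (by rw [max_eq_right hij'.le]) hkgt
            exact L_L2a hf (Or.inl ⟨hij', hjk'⟩) hyp hyi hyk hyj hG'
          · -- j < i < k : same side
            have hik' : i < k := lt_of_le_of_lt (by rw [max_eq_left hij'.le]) hkgt
            have hGaux : f (y + unitv n i + unitv n k) +
                f (y + unitv n i + unitv n j + unitv n j) ≤
                f (y + unitv n i + unitv n j + unitv n k) +
                f (y + unitv n i + unitv n j) := by
              have hb2 : (y + unitv n i) k < a k := by
                simp only [Pi.add_apply, unitv_apply, if_neg hki]; simpa using hyk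
              have hb3 : (y + unitv n i) j + 2 ≤ a j := by
                simp only [Pi.add_apply, unitv_apply, if_neg (Ne.symm hij)]; simpa using hyj
              have hmu2 : mu a (y + unitv n i) k j < mu a x i j := by
                refine mu_alpha hyx hvy ?_
                have hji : j < i := hij'
                rw [Fin.lt_def] at hik' hji
                unfold dst; omega
              have h := IH (y + unitv n i) k j (by omega) hkj hbyi hb2 hb3
              rwa [show y + unitv n i + unitv n k + unitv n j =
                  y + unitv n i + unitv n j + unitv n k from by abel] at h
            exact L_L2b hf (Or.inl ⟨hij', hik'⟩) hyp hyi hyk hyj hG' hGaux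
      · -- base case: all four vectors are fints
        push_neg at hAm hS
        refine L_base hb hij hx hxi hxj ?_ ?_
        · intro m h1 h2
          have hcond : (i < m ∧ m < j) ∨ (j < m ∧ m < i) := by
            rcases lt_or_gt_of_ne hij with h' | h'
            · left; rw [min_eq_left h'.le] at h1; rw [max_eq_right h'.le] at h2
              exact ⟨h1, h2⟩
            · right; rw [min_eq_right h'.le] at h1; rw [max_eq_left h'.le] at h2
              exact ⟨h1, h2⟩
          exact le_antisymm (hx m) (hAm m hcond)
        · exact hS

end SkewAux
namespace SkewAux

lemma mem1 {n : ℕ} {a x : Fin n → ℕ} {q : Fin n}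
    (hx : ∀ p, x p ≤ a p) (hq : x q < a q) :
    x + unitv n q ∈ tbox a 0 (vsize a) := by
  refine mem_box.2 fun s => ?_
  have h0 := hx s
  simp only [Pi.add_apply, unitv_apply]
  rcases eq_or_ne s q with rfl | h1 <;> simp_all <;> omega

lemma mem2 {n : ℕ} {a x : Fin n → ℕ} {q r : Fin n} (hqr : q ≠ r)
    (hx : ∀ p, x p ≤ a p) (hq : x q < a q) (hr : x r < a r) :
    x + unitv n q + unitv n r ∈ tbox a 0 (vsize a) := by
  refine mem_box.2 fun s => ?_
  have h0 := hx s
  simp only [Pi.add_apply, unitv_apply]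
  rcases eq_or_ne s q with rfl | h1 <;> rcases eq_or_ne s r with rfl | h2 <;>
    simp_all <;> omega

end SkewAux

open SkewAux

/-- **Skew-submodularity propagates from the standard basis** (Theorem 4): a
TP-function `f` on a box `B(a)` is skew-submodular iff its restriction to the
standard basis `Int(a)` is skew-submodular; furthermore, a skew-submodular
TP-function satisfies the additional relations
`f(x+1_i+1_j)+f(x+1_j+1_k) ≥ f(x+1_i+1_k)+f(x+2·1_j)` for pairwise distinct
`i, j, k` with all four vectors in `B(a)`. -/
theorem skew_submodular_iff_on_basis {n : ℕ} (a : Fin n → ℕ) (ha : ∀ i, 0 < a i)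
    (f : (Fin n → ℕ) → ℝ) (hf : IsTP (tbox a 0 (vsize a)) f) :
    (SkewSubmodOn (tbox a 0 (vsize a)) f ↔ SkewSubmodOn (intSet a) f) ∧
    (SkewSubmodOn (tbox a 0 (vsize a)) f →
      ∀ (x : Fin n → ℕ) (i j k : Fin n), i ≠ j → j ≠ k → i ≠ k →
        x + unitv n i + unitv n j ∈ tbox a 0 (vsize a) →
        x + unitv n j + unitv n k ∈ tbox a 0 (vsize a) →
        x + unitv n i + unitv n k ∈ tbox a 0 (vsize a) →
        x + unitv n j + unitv n j ∈ tbox a 0 (vsize a) →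
        f (x + unitv n i + unitv n k) + f (x + unitv n j + unitv n j) ≤
          f (x + unitv n i + unitv n j) + f (x + unitv n j + unitv n k)) := by
  have hsub : intSet a ⊆ tbox a 0 (vsize a) := by
    intro z hz
    rcases hz with h | rfl
    · exact mem_box.2 h.1
    · exact mem_box.2 fun p => Nat.zero_le _
  constructor
  · constructor
    · intro hbox x i j hij m1 m2 m3 m4
      exact hbox x i j hij (hsub m1) (hsub m2) (hsub m3) (hsub m4)
    · intro hbasis x i j hij m1 m2 m3 m4
      have h3 := mem_box.1 m3
      have h4 := mem_box.1 m4
      have hx : ∀ p, x p ≤ a p := by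
        intro p
        have h := h3 p
        simp only [Pi.add_apply, unitv_apply] at h
        split_ifs at h <;> omega
      have hxi : x i < a i := by
        have h := h3 i
        simp [Pi.add_apply, unitv_apply, hij] at h
        omega
      have hxj : x j + 2 ≤ a j := by
        have h := h4 j
        simp [Pi.add_apply, unitv_apply] at h
        omega
      exact main ha hf.1 hbasis (mu a x i j) x i j le_rfl hij hx hxi hxj
  · intro hbox x i j k hij hjk hik m1 m2 m3 m4
    have h1 := mem_box.1 m1
    have h2 := mem_box.1 m2
    have h4 := mem_box.1 m4
    have hx : ∀ p, x p ≤ a p := by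
      intro p
      have h := h1 p
      simp only [Pi.add_apply, unitv_apply] at h
      split_ifs at h <;> omega
    have hxi : x i < a i := by
      have h := h1 i
      simp [Pi.add_apply, unitv_apply, hij] at h
      omega
    have hxk : x k < a k := by
      have h := h2 k
      simp [Pi.add_apply, unitv_apply, Ne.symm hjk] at h
      omega
    have hxj : x j + 2 ≤ a j := by
      have h := h4 j
      simp [Pi.add_apply, unitv_apply] at h
      omega
    have hxj' : x j < a j := by omega
    have mi : x + unitv n i ∈ tbox a 0 (vsize a) := mem1 hx hxi
    have mj : x + unitv n j ∈ tbox a 0 (vsize a) := mem1 hx hxj'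
    have mk : x + unitv n k ∈ tbox a 0 (vsize a) := mem1 hx hxk
    have mkj : x + unitv n k + unitv n j ∈ tbox a 0 (vsize a) :=
      mem2 (Ne.symm hjk) hx hxk hxj'
    have hGi := hbox x i j hij mi mj m1 m4
    have hGk := hbox x k j (Ne.symm hjk) mk mj mkj m4
    exact L_L1 hf.1 hij hjk hik hx hxi hxk hxj hGi hGk
end
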